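/- arXiv:1612.03095 — 6 statements merged into one kernel-verified Lean document; each statement's English description precedes it below -/
import Mathlib

section
/- Let φ, η₁, η₂ : ℤ → ℂ∖{0} be periodic of periods n₁, n₁, n₂ respectively with gcd(n₁, n₂) = 1. Suppose there exists δ > 0 such that for all large enough N, the number of t ∈ {1,…,N} with φ(t) ≠ η₁(t)η₂(t) is less than δN. Then there exists a nonzero complex number ξ such that for all large enough N, the number of t ∈ {1,…,N} with φ(t) ≠ ξ·η₁(t) is less than 2δN. -/
open Filter Finset

private lemma per_iter {P : ℕ → Prop} {d : ℕ} (h : ∀ t, P (t + d) ↔ P t) :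
    ∀ k t, P (t + k * d) ↔ P t := by
  intro k
  induction k with
  | zero => simp
  | succ k ih =>
    intro t
    have he : t + (k + 1) * d = (t + k * d) + d := by ring
    rw [he, h, ih]

private lemma fun_per_iter {A : ℕ → ℂ} {d : ℕ} (h : ∀ t, A (t + d) = A t) :
    ∀ k t, A (t + k * d) = A t := by
  intro k
  induction k with
  | zero => simp
  | succ k ih =>
    intro t
    have he : t + (k + 1) * d = (t + k * d) + d := by ring
    rw [he, h, ih]

private lemma fun_per_mod {A : ℕ → ℂ} {d : ℕ} (h : ∀ t, A (t + d) = A t) (s : ℕ) :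
    A s = A (s % d) := by
  conv_lhs => rw [← Nat.mod_add_div s d, Nat.mul_comm]
  exact fun_per_iter h _ _

private lemma count_mul {P : ℕ → Prop} [DecidablePred P] {d : ℕ}
    (h : ∀ t, P (t + d) ↔ P t) (M : ℕ) :
    ((range (M * d)).filter P).card = M * ((range d).filter P).card := by
  induction M with
  | zero => simp
  | succ M ih =>
    have hr : range ((M + 1) * d) = range (M * d) ∪ (range d).map (addLeftEmbedding (M * d)) := by
      rw [Nat.succ_mul, Finset.range_add]
    rw [hr, filter_union, card_union_of_disjoint, ih, filter_map, card_map]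
    · have hc : ((range d).filter (P ∘ addLeftEmbedding (M * d))).card
          = ((range d).filter P).card := by
        congr 1
        apply filter_congr
        intro x _
        simp only [Function.comp, addLeftEmbedding_apply]
        have he : M * d + x = x + M * d := by ring
        rw [he]
        simp [per_iter h M x]
      rw [hc]; ring
    · exact disjoint_filter_filter (by
        simp only [disjoint_left, mem_range, Finset.mem_map, addLeftEmbedding_apply]
        rintro a ha ⟨b, _, rfl⟩
        omega)

private lemma count_le {P : ℕ → Prop} [DecidablePred P] {d : ℕ} (hd : 0 < d)
    (h : ∀ t, P (t + d) ↔ P t) (N : ℕ) :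
    ((range N).filter P).card ≤ (N / d + 1) * ((range d).filter P).card := by
  rw [← count_mul h]
  apply card_le_card
  apply filter_subset_filter
  apply range_subset_range.2
  nlinarith [Nat.div_add_mod N d, Nat.mod_lt N hd]

private lemma card_icc_shift {P : ℕ → Prop} [DecidablePred P] (N : ℕ) :
    ((Icc 1 N).filter P).card = ((range N).filter fun t => P (t + 1)).card := by
  apply Finset.card_bij (fun t _ => t - 1)
  · intro a ha
    simp only [mem_filter, mem_Icc, mem_range] at ha ⊢
    obtain ⟨⟨h1, h2⟩, h3⟩ := ha
    refine ⟨by omega, ?_⟩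
    have he : a - 1 + 1 = a := by omega
    rw [he]; exact h3
  · intro a ha b hb hab
    simp only [mem_filter, mem_Icc] at ha hb
    omega
  · intro b hb
    simp only [mem_filter, mem_Icc, mem_range] at hb
    refine ⟨b + 1, ?_, by omega⟩
    simp only [mem_filter, mem_Icc]
    exact ⟨⟨by omega, by omega⟩, hb.2⟩

private lemma crt_count (A B₁ B₂ : ℕ → ℂ) (n₁ n₂ : ℕ) (h1 : 0 < n₁) (h2 : 0 < n₂)
    (hA : ∀ t, A (t + n₁) = A t) (hB₁ : ∀ t, B₁ (t + n₁) = B₁ t)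
    (hB₂ : ∀ t, B₂ (t + n₂) = B₂ t) (hcop : Nat.Coprime n₁ n₂) :
    ((range (n₁ * n₂)).filter fun t => A t ≠ B₁ t * B₂ t).card
      = ∑ c ∈ range n₂, ((range n₁).filter fun r => A r ≠ B₁ r * B₂ c).card := by
  classical
  rw [Finset.card_eq_sum_card_fiberwise (f := fun s => s % n₂) (t := range n₂)
    (fun x _ => mem_range.2 (Nat.mod_lt _ h2))]
  apply Finset.sum_congr rfl
  intro c hc
  rw [mem_range] at hc
  apply Finset.card_bij (fun s _ => s % n₁)
  · intro s hs
    simp only [mem_filter, mem_range] at hs ⊢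
    obtain ⟨⟨hsm, hQs⟩, hsc⟩ := hs
    refine ⟨Nat.mod_lt _ h1, ?_⟩
    rw [← fun_per_mod hA s, ← fun_per_mod hB₁ s, ← hsc, ← fun_per_mod hB₂ s]
    exact hQs
  · intro a ha b hb hab
    simp only [mem_filter, mem_range] at ha hb
    have hmod : a ≡ b [MOD n₁ * n₂] :=
      (Nat.modEq_and_modEq_iff_modEq_mul hcop).1 ⟨hab, ha.2.trans hb.2.symm⟩
    have := hmod
    unfold Nat.ModEq at this
    rw [Nat.mod_eq_of_lt ha.1.1, Nat.mod_eq_of_lt hb.1.1] at this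
    exact this
  · intro r hr
    simp only [mem_filter, mem_range] at hr
    obtain ⟨hrlt, hrP⟩ := hr
    obtain ⟨z, hz1, hz2⟩ := Nat.chineseRemainder hcop r c
    refine ⟨z % (n₁ * n₂), ?_, ?_⟩
    · have hs1 : z % (n₁ * n₂) % n₁ = r := by
        rw [Nat.mod_mod_of_dvd _ (dvd_mul_right n₁ n₂)]
        rw [hz1]; exact Nat.mod_eq_of_lt hrlt
      have hs2 : z % (n₁ * n₂) % n₂ = c := by
        rw [Nat.mod_mod_of_dvd _ (dvd_mul_left n₂ n₁)]
        rw [hz2]; exact Nat.mod_eq_of_lt hc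
      simp only [mem_filter, mem_range]
      refine ⟨⟨Nat.mod_lt _ (Nat.mul_pos h1 h2), ?_⟩, hs2⟩
      rw [fun_per_mod hA (z % (n₁ * n₂)), fun_per_mod hB₁ (z % (n₁ * n₂)),
        fun_per_mod hB₂ (z % (n₁ * n₂)), hs1, hs2]
      exact hrP
    · rw [Nat.mod_mod_of_dvd _ (dvd_mul_right n₁ n₂), hz1]
      exact Nat.mod_eq_of_lt hrlt

theorem periodic_approx_factor (φ η₁ η₂ : ℤ → ℂ) (n₁ n₂ : ℕ)
    (hn₁ : 0 < n₁) (hn₂ : 0 < n₂)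
    (hφ0 : ∀ t, φ t ≠ 0) (hη₁0 : ∀ t, η₁ t ≠ 0) (hη₂0 : ∀ t, η₂ t ≠ 0)
    (hφper : ∀ t, φ (t + n₁) = φ t)
    (hη₁per : ∀ t, η₁ (t + n₁) = η₁ t)
    (hη₂per : ∀ t, η₂ (t + n₂) = η₂ t)
    (hcop : Nat.Coprime n₁ n₂)
    (δ : ℝ) (hδ : 0 < δ)
    (H : ∀ᶠ N : ℕ in atTop,
      (((Finset.Icc 1 N).filter fun t : ℕ => φ (t : ℤ) ≠ η₁ (t : ℤ) * η₂ (t : ℤ)).card : ℝ) < δ * N) :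
    ∃ ξ : ℂ, ξ ≠ 0 ∧ ∀ᶠ N : ℕ in atTop,
      (((Finset.Icc 1 N).filter fun t : ℕ => φ (t : ℤ) ≠ ξ * η₁ (t : ℤ)).card : ℝ) < 2 * δ * N := by
  classical
  have hmpos : 0 < n₁ * n₂ := Nat.mul_pos hn₁ hn₂
  set A : ℕ → ℂ := fun t => φ ((t + 1 : ℕ) : ℤ) with hA
  set B₁ : ℕ → ℂ := fun t => η₁ ((t + 1 : ℕ) : ℤ) with hB₁
  set B₂ : ℕ → ℂ := fun t => η₂ ((t + 1 : ℕ) : ℤ) with hB₂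
  have hAper : ∀ t, A (t + n₁) = A t := by
    intro t; simp only [hA]; push_cast
    rw [show ((t : ℤ) + n₁ + 1) = ((t : ℤ) + 1) + n₁ by ring, hφper]
  have hB₁per : ∀ t, B₁ (t + n₁) = B₁ t := by
    intro t; simp only [hB₁]; push_cast
    rw [show ((t : ℤ) + n₁ + 1) = ((t : ℤ) + 1) + n₁ by ring, hη₁per]
  have hB₂per : ∀ t, B₂ (t + n₂) = B₂ t := by
    intro t; simp only [hB₂]; push_cast
    rw [show ((t : ℤ) + n₂ + 1) = ((t : ℤ) + 1) + n₂ by ring, hη₂per]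
  set Q : ℕ → Prop := fun t => A t ≠ B₁ t * B₂ t with hQ
  have hQper : ∀ t, Q (t + n₁ * n₂) ↔ Q t := by
    intro t
    have e1 : A (t + n₁ * n₂) = A t := by
      rw [Nat.mul_comm]; exact fun_per_iter hAper n₂ t
    have e2 : B₁ (t + n₁ * n₂) = B₁ t := by
      rw [Nat.mul_comm]; exact fun_per_iter hB₁per n₂ t
    have e3 : B₂ (t + n₁ * n₂) = B₂ t := fun_per_iter hB₂per n₁ t
    simp only [hQ, e1, e2, e3]
  set B : ℕ := ((range (n₁ * n₂)).filter Q).card with hBdef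
  -- Step 1: B < δ * (n₁ * n₂)
  have hB : (B : ℝ) < δ * (n₁ * n₂) := by
    obtain ⟨N₀, hN₀⟩ := eventually_atTop.1 H
    set M : ℕ := N₀ + 1 with hM
    have hge : N₀ ≤ M * (n₁ * n₂) := by
      calc N₀ ≤ M := Nat.le_succ N₀
      _ ≤ M * (n₁ * n₂) := Nat.le_mul_of_pos_right M hmpos
    have hN := hN₀ _ hge
    rw [card_icc_shift] at hN
    have he : ((range (M * (n₁ * n₂))).filter fun t =>
        φ ((t + 1 : ℕ) : ℤ) ≠ η₁ ((t + 1 : ℕ) : ℤ) * η₂ ((t + 1 : ℕ) : ℤ)).card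
        = M * B := by
      rw [hBdef]; exact count_mul hQper M
    rw [he] at hN
    have hMpos : (0 : ℝ) < M := by positivity
    push_cast at hN
    nlinarith
  -- Step 2 and 3: find good residue c
  have hsum : B = ∑ c ∈ range n₂, ((range n₁).filter fun r => A r ≠ B₁ r * B₂ c).card :=
    crt_count A B₁ B₂ n₁ n₂ hn₁ hn₂ hAper hB₁per hB₂per hcop
  obtain ⟨c, hcmem, hcmin⟩ := Finset.exists_min_image (range n₂)
    (fun c => ((range n₁).filter fun r => A r ≠ B₁ r * B₂ c).card) ⟨0, mem_range.2 hn₂⟩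
  set k : ℕ := ((range n₁).filter fun r => A r ≠ B₁ r * B₂ c).card with hkdef
  have hkB : n₂ * k ≤ B := by
    rw [hsum]
    calc n₂ * k = ∑ _c ∈ range n₂, k := by rw [Finset.sum_const, card_range, smul_eq_mul]
    _ ≤ _ := Finset.sum_le_sum fun c' hc' => hcmin c' hc'
  have hk : (k : ℝ) < δ * n₁ := by
    have h2 : (0 : ℝ) < n₂ := by positivity
    have : (n₂ : ℝ) * k ≤ B := by exact_mod_cast hkB
    nlinarith
  refine ⟨B₂ c, hη₂0 _, ?_⟩
  -- Final step
  rw [eventually_atTop]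
  refine ⟨n₁, fun N hN => ?_⟩
  set R : ℕ → Prop := fun t => A t ≠ B₂ c * B₁ t with hR
  have hRper : ∀ t, R (t + n₁) ↔ R t := by
    intro t; simp only [hR, hAper, hB₁per]
  have hshift : (((Finset.Icc 1 N).filter fun t : ℕ => φ (t : ℤ) ≠ B₂ c * η₁ (t : ℤ)).card)
      = ((range N).filter R).card := card_icc_shift N
  rw [hshift]
  have hkR : ((range n₁).filter R).card = k := by
    rw [hkdef]; congr 1; apply filter_congr; intro x _
    simp only [hR, mul_comm]
  have hle : ((range N).filter R).card ≤ (N / n₁ + 1) * k := by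
    rw [← hkR]; exact count_le hn₁ hRper N
  have hle' : (((range N).filter R).card : ℝ) ≤ ((N / n₁ : ℕ) + 1) * k := by
    exact_mod_cast hle
  have hq : ((N / n₁ : ℕ) : ℝ) * n₁ ≤ N := by
    exact_mod_cast Nat.div_mul_le_self N n₁
  have hn₁N : (n₁ : ℝ) ≤ N := by exact_mod_cast hN
  have hn₁pos : (0 : ℝ) < n₁ := by positivity
  have hqnn : (0 : ℝ) ≤ ((N / n₁ : ℕ) : ℝ) := Nat.cast_nonneg _
  have hknn : (0 : ℝ) ≤ k := Nat.cast_nonneg _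
  calc (((range N).filter R).card : ℝ) ≤ ((N / n₁ : ℕ) + 1) * k := hle'
    _ < ((N / n₁ : ℕ) + 1) * (δ * n₁) := by
        apply mul_lt_mul_of_pos_left hk
        positivity
    _ = ((N / n₁ : ℕ) : ℝ) * n₁ * δ + δ * n₁ := by ring
    _ ≤ N * δ + δ * N := by
        gcongr
    _ = 2 * δ * N := by ring
end

section
/- Let φ : ℤ → ℂ∖{0} be periodic of period ℓ, and let η(t) = ∏_{i=1}^{k} h_{p_i}(t) where each h_{p_i} : ℤ → ℂ∖{0} is periodic of period p_i^{r_i} and p₁,…,p_k are distinct primes. Suppose that for all large enough N, the number of t ∈ {1,…,N} with φ(t) ≠ η(t) is less than N/(4ℓ²). Then there exist ρ ∈ ℂ∖{0} and, for each prime p dividing ℓ, a function h_p* : ℤ → ℂ periodic of period p^{v_p(ℓ)}, such that φ(t) = ρ·∏_{p | ℓ} h_p*(t) for all t ∈ ℤ. -/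
open Filter Finset

lemma auxPerMul (f : ℤ → ℂ) (n : ℕ) (h : ∀ t, f (t + (n : ℤ)) = f t) :
    ∀ (c : ℤ) (t : ℤ), f (t + (n : ℤ) * c) = f t := by
  intro c
  induction c using Int.induction_on with
  | zero => simp
  | succ k ih =>
    intro t
    have e : t + (n : ℤ) * (k + 1) = (t + n) + n * k := by ring
    rw [e, ih, h]
  | pred k ih =>
    intro t
    have e : t + (n : ℤ) * (-k - 1) = (t - n) + n * (-k) := by ring
    rw [e, ih]
    have h2 := h (t - n)
    rw [show (t - (n:ℤ)) + n = t by ring] at h2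
    exact h2.symm

lemma auxPerDvd (f : ℤ → ℂ) (n : ℕ) (h : ∀ t, f (t + (n : ℤ)) = f t)
    {d : ℤ} (hd : (n : ℤ) ∣ d) (t : ℤ) : f (t + d) = f t := by
  obtain ⟨c, rfl⟩ := hd
  exact auxPerMul f n h c t

lemma auxProdDvd {α : Type*} (s : Finset α) (f : α → ℕ) (N : ℕ)
    (hc : ∀ a ∈ s, ∀ b ∈ s, a ≠ b → Nat.Coprime (f a) (f b))
    (hd : ∀ a ∈ s, f a ∣ N) : (∏ a ∈ s, f a) ∣ N := by
  classical
  induction s using Finset.induction_on with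
  | empty => simpa using one_dvd N
  | insert _ _ ha ih =>
    rename_i a s
    rw [Finset.prod_insert ha]
    have hcop : Nat.Coprime (f a) (∏ b ∈ s, f b) :=
      Nat.Coprime.prod_right fun b hb =>
        hc a (Finset.mem_insert_self a s) b (Finset.mem_insert_of_mem hb)
          (fun hab => ha (hab ▸ hb))
    exact hcop.mul_dvd_of_dvd_of_dvd (hd a (Finset.mem_insert_self a s))
      (ih (fun x hx y hy hxy => hc x (Finset.mem_insert_of_mem hx) y (Finset.mem_insert_of_mem hy) hxy)
        (fun x hx => hd x (Finset.mem_insert_of_mem hx)))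

lemma auxCount (P : ℕ) (Bad : ℕ → Prop) [DecidablePred Bad]
    (hper : ∀ t, Bad (t + P) ↔ Bad t) (M : ℕ) :
    ((Finset.Ioc 0 (P * M)).filter Bad).card = M * ((Finset.Ioc 0 P).filter Bad).card := by
  induction M with
  | zero => simp
  | succ M ih =>
    have hsplit : Finset.Ioc 0 (P * (M + 1)) = Finset.Ioc 0 (P * M) ∪ Finset.Ioc (P * M) (P * (M + 1)) :=
      (Finset.Ioc_union_Ioc_eq_Ioc (Nat.zero_le _) (Nat.mul_le_mul_left P (Nat.le_succ M))).symm
    have hPM : P * (M + 1) = P * M + P := by ring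
    have hdisj : Disjoint ((Finset.Ioc 0 (P * M)).filter Bad)
        ((Finset.Ioc (P * M) (P * (M + 1))).filter Bad) := by
      apply Finset.disjoint_filter_filter
      rw [Finset.disjoint_left]
      intro t ht1 ht2
      simp only [Finset.mem_Ioc] at ht1 ht2
      omega
    have hperk : ∀ k t, Bad (t + P * k) ↔ Bad t := by
      intro k
      induction k with
      | zero => simp
      | succ k ih2 =>
        intro t
        rw [show t + P * (k + 1) = (t + P * k) + P by ring, hper, ih2]
    have hblock : ((Finset.Ioc (P * M) (P * (M + 1))).filter Bad).card
        = ((Finset.Ioc 0 P).filter Bad).card := by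
      apply Finset.card_bij' (fun t _ => t - P * M) (fun t _ => t + P * M)
      · intro t ht
        simp only [Finset.mem_filter, Finset.mem_Ioc] at ht ⊢
        refine ⟨⟨by omega, by omega⟩, ?_⟩
        rw [← hperk M (t - P * M), show t - P * M + P * M = t by omega]
        exact ht.2
      · intro t ht
        simp only [Finset.mem_filter, Finset.mem_Ioc] at ht ⊢
        refine ⟨⟨by omega, by omega⟩, (hperk M t).mpr ht.2⟩
      · intro t ht
        simp only [Finset.mem_filter, Finset.mem_Ioc] at ht
        omega
      · intro t ht
        simp only [Finset.mem_filter, Finset.mem_Ioc] at ht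
        omega
    rw [hsplit, Finset.filter_union, Finset.card_union_of_disjoint hdisj, ih, hblock]
    ring


section FourPoint

variable {I : Type*} [Fintype I] [DecidableEq I]
  {A : I → Type*} [∀ i, AddCommGroup (A i)] [∀ i, DecidableEq (A i)]
  {A' : I → Type*} [∀ i, AddCommGroup (A' i)] [∀ i, DecidableEq (A' i)]

lemma fourPoint (Q : ∀ i, A i →+ A' i) (f : (∀ i, A i) → ℂ) (c : ∀ i, A i → ℂ)
    (hinv : ∀ x y : ∀ i, A i, (∀ i, Q i (x i) = Q i (y i)) → f x = f y)
    (B : Finset (∀ i, A i))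
    (hB : ∀ x, x ∉ B → f x = ∏ i, c i (x i))
    (K : Finset (∀ i, A i)) (hK : ∀ z, z ∈ K ↔ ∀ i, Q i (z i) = 0)
    (hcard : 4 * B.card < K.card)
    (S : Finset I) (a b : ∀ i, A i)
    (ha : ∀ i, i ∉ S → a i = 0) (hb : ∀ i, i ∈ S → b i = 0) :
    f (a + b) * f 0 = f a * f b := by
  classical
  set T : Finset ((∀ i, A i) × (∀ i, A i)) := K ×ˢ K with hT
  set gX : ((∀ i, A i) × (∀ i, A i)) → (∀ i, A i) :=
    fun zw i => if i ∈ S then a i + zw.1 i else b i + zw.2 i with hgX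
  set gY : ((∀ i, A i) × (∀ i, A i)) → (∀ i, A i) :=
    fun zw i => if i ∈ S then b i + zw.2 i else a i + zw.1 i with hgY
  have hKcard : 0 < K.card := by omega
  -- bad sets
  have hbound1 : (T.filter fun zw => a + zw.1 ∈ B).card ≤ B.card * K.card := by
    have := Finset.card_le_card_of_injOn (f := fun zw : (∀ i, A i) × (∀ i, A i) => (a + zw.1, zw.2))
      (s := T.filter fun zw => a + zw.1 ∈ B) (t := B ×ˢ K) ?_ ?_
    · simpa [Finset.card_product] using this
    · intro zw hzw
      simp only [Finset.mem_coe, Finset.mem_filter, hT, Finset.mem_product] at hzw ⊢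
      exact ⟨hzw.2, hzw.1.2⟩
    · intro zw _ zw' _ heq
      simp only [Prod.mk.injEq] at heq
      exact Prod.ext (by have := heq.1; exact add_left_cancel this) heq.2
  have hbound2 : (T.filter fun zw => b + zw.2 ∈ B).card ≤ B.card * K.card := by
    have := Finset.card_le_card_of_injOn (f := fun zw : (∀ i, A i) × (∀ i, A i) => (b + zw.2, zw.1))
      (s := T.filter fun zw => b + zw.2 ∈ B) (t := B ×ˢ K) ?_ ?_
    · simpa [Finset.card_product] using this
    · intro zw hzw
      simp only [Finset.mem_coe, Finset.mem_filter, hT, Finset.mem_product] at hzw ⊢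
      exact ⟨hzw.2, hzw.1.1⟩
    · intro zw _ zw' _ heq
      simp only [Prod.mk.injEq] at heq
      exact Prod.ext heq.2 (add_left_cancel heq.1)
  have hbound3 : (T.filter fun zw => gX zw ∈ B).card ≤ B.card * K.card := by
    have := Finset.card_le_card_of_injOn
      (f := fun zw : (∀ i, A i) × (∀ i, A i) => (gX zw, fun i => if i ∈ S then zw.2 i else zw.1 i))
      (s := T.filter fun zw => gX zw ∈ B) (t := B ×ˢ K) ?_ ?_
    · simpa [Finset.card_product] using this
    · intro zw hzw
      simp only [Finset.mem_coe, Finset.mem_filter, hT, Finset.mem_product] at hzw ⊢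
      refine ⟨hzw.2, ?_⟩
      rw [hK]
      intro i
      by_cases hi : i ∈ S
      · simp only [hi, if_pos]
        exact (hK _).mp hzw.1.2 i
      · simp only [hi, if_neg, if_false]
        exact (hK _).mp hzw.1.1 i
    · intro zw _ zw' _ heq
      simp only [Prod.mk.injEq] at heq
      have h1 := heq.1
      have h2 := heq.2
      apply Prod.ext
      · funext i
        by_cases hi : i ∈ S
        · have := congrFun h1 i
          simp only [hgX, hi, if_pos] at this
          exact add_left_cancel this
        · have := congrFun h2 i
          simpa [hi] using this
      · funext i
        by_cases hi : i ∈ S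
        · have := congrFun h2 i
          simpa [hi] using this
        · have := congrFun h1 i
          simp only [hgX, hi, if_neg, if_false] at this
          exact add_left_cancel this
  have hbound4 : (T.filter fun zw => gY zw ∈ B).card ≤ B.card * K.card := by
    have := Finset.card_le_card_of_injOn
      (f := fun zw : (∀ i, A i) × (∀ i, A i) => (gY zw, fun i => if i ∈ S then zw.1 i else zw.2 i))
      (s := T.filter fun zw => gY zw ∈ B) (t := B ×ˢ K) ?_ ?_
    · simpa [Finset.card_product] using this
    · intro zw hzw
      simp only [Finset.mem_coe, Finset.mem_filter, hT, Finset.mem_product] at hzw ⊢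
      refine ⟨hzw.2, ?_⟩
      rw [hK]
      intro i
      by_cases hi : i ∈ S
      · simp only [hi, if_pos]
        exact (hK _).mp hzw.1.1 i
      · simp only [hi, if_neg, if_false]
        exact (hK _).mp hzw.1.2 i
    · intro zw _ zw' _ heq
      simp only [Prod.mk.injEq] at heq
      have h1 := heq.1
      have h2 := heq.2
      apply Prod.ext
      · funext i
        by_cases hi : i ∈ S
        · have := congrFun h2 i
          simpa [hi] using this
        · have := congrFun h1 i
          simp only [hgY, hi, if_neg, if_false] at this
          exact add_left_cancel this
      · funext i
        by_cases hi : i ∈ S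
        · have := congrFun h1 i
          simp only [hgY, hi, if_pos] at this
          exact add_left_cancel this
        · have := congrFun h2 i
          simpa [hi] using this
  -- existence of a good pair
  have hnotsub : ¬ (T ⊆ ((T.filter fun zw => a + zw.1 ∈ B) ∪ (T.filter fun zw => b + zw.2 ∈ B))
      ∪ ((T.filter fun zw => gX zw ∈ B) ∪ (T.filter fun zw => gY zw ∈ B))) := by
    intro hsub
    have hc := Finset.card_le_card hsub
    have hTcard : T.card = K.card * K.card := by simp [hT, Finset.card_product]
    have h4 : (((T.filter fun zw => a + zw.1 ∈ B) ∪ (T.filter fun zw => b + zw.2 ∈ B))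
      ∪ ((T.filter fun zw => gX zw ∈ B) ∪ (T.filter fun zw => gY zw ∈ B))).card
        ≤ 4 * (B.card * K.card) := by
      calc _ ≤ ((T.filter fun zw => a + zw.1 ∈ B) ∪ (T.filter fun zw => b + zw.2 ∈ B)).card
          + ((T.filter fun zw => gX zw ∈ B) ∪ (T.filter fun zw => gY zw ∈ B)).card :=
            Finset.card_union_le _ _
      _ ≤ ((T.filter fun zw => a + zw.1 ∈ B).card + (T.filter fun zw => b + zw.2 ∈ B).card)
          + ((T.filter fun zw => gX zw ∈ B).card + (T.filter fun zw => gY zw ∈ B).card) :=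
            Nat.add_le_add (Finset.card_union_le _ _) (Finset.card_union_le _ _)
      _ ≤ 4 * (B.card * K.card) := by omega
    rw [hTcard] at hc
    have hlt : 4 * B.card * K.card < K.card * K.card :=
      Nat.mul_lt_mul_of_lt_of_le hcard (le_refl K.card) hKcard
    rw [mul_assoc] at hlt
    omega
  obtain ⟨zw, hzwT, hzwbad⟩ := Finset.not_subset.mp hnotsub
  simp only [Finset.mem_union, Finset.mem_filter, not_or, not_and] at hzwbad
  have hz : zw.1 ∈ K := (Finset.mem_product.mp hzwT).1
  have hw : zw.2 ∈ K := (Finset.mem_product.mp hzwT).2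
  have hQz : ∀ i, Q i (zw.1 i) = 0 := (hK _).mp hz
  have hQw : ∀ i, Q i (zw.2 i) = 0 := (hK _).mp hw
  have hnb1 : a + zw.1 ∉ B := fun hmem => (hzwbad.1.1 hzwT) hmem
  have hnb2 : b + zw.2 ∉ B := fun hmem => (hzwbad.1.2 hzwT) hmem
  have hnb3 : gX zw ∉ B := fun hmem => (hzwbad.2.1 hzwT) hmem
  have hnb4 : gY zw ∉ B := fun hmem => (hzwbad.2.2 hzwT) hmem
  -- the four congruences
  have e1 : f (a + b) = f (gX zw) := by
    apply hinv
    intro i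
    by_cases hi : i ∈ S
    · simp only [hgX, hi, if_pos, Pi.add_apply, map_add, hQz i, hb i hi, map_zero, add_zero]
    · simp only [hgX, hi, if_neg, if_false, Pi.add_apply, map_add, hQw i, ha i hi, map_zero,
        zero_add, add_zero]
  have e0 : f 0 = f (gY zw) := by
    apply hinv
    intro i
    by_cases hi : i ∈ S
    · simp only [hgY, hi, if_pos, Pi.zero_apply, map_add, map_zero, hQw i, hb i hi, add_zero]
    · simp only [hgY, hi, if_neg, if_false, Pi.zero_apply, map_add, map_zero, hQz i, ha i hi,
        add_zero]
  have e2 : f a = f (a + zw.1) := by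
    apply hinv
    intro i
    simp only [Pi.add_apply, map_add, hQz i, add_zero]
  have e3 : f b = f (b + zw.2) := by
    apply hinv
    intro i
    simp only [Pi.add_apply, map_add, hQw i, add_zero]
  rw [e1, e0, e2, e3, hB _ hnb3, hB _ hnb4, hB _ hnb1, hB _ hnb2,
    ← Finset.prod_mul_distrib, ← Finset.prod_mul_distrib]
  apply Finset.prod_congr rfl
  intro i _
  by_cases hi : i ∈ S
  · simp only [hgX, hgY, hi, if_pos, Pi.add_apply]
  · simp only [hgX, hgY, hi, if_neg, if_false, Pi.add_apply]
    ring

lemma tensorDecomp (Q : ∀ i, A i →+ A' i) (f : (∀ i, A i) → ℂ) (c : ∀ i, A i → ℂ)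
    (hinv : ∀ x y : ∀ i, A i, (∀ i, Q i (x i) = Q i (y i)) → f x = f y)
    (B : Finset (∀ i, A i))
    (hB : ∀ x, x ∉ B → f x = ∏ i, c i (x i))
    (K : Finset (∀ i, A i)) (hK : ∀ z, z ∈ K ↔ ∀ i, Q i (z i) = 0)
    (hcard : 4 * B.card < K.card) (x : ∀ i, A i) :
    f x * (f 0) ^ (Fintype.card I) = f 0 * ∏ i, f (Pi.single i (x i)) := by
  classical
  have main : ∀ S : Finset I, f (fun i => if i ∈ S then x i else 0) * (f 0) ^ S.card
      = f 0 * ∏ i ∈ S, f (Pi.single i (x i)) := by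
    intro S
    induction S using Finset.induction_on with
    | empty =>
      simp only [Finset.notMem_empty, if_false, Finset.card_empty, pow_zero, mul_one,
        Finset.prod_empty]
      rfl
    | insert _ _ hj ih =>
      rename_i j S
      have hab : (Pi.single j (x j) + fun i => if i ∈ S then x i else 0)
          = fun i => if i ∈ insert j S then x i else 0 := by
        funext i
        by_cases hij : i = j
        · subst hij
          simp [hj]
        · simp [Pi.single_eq_of_ne hij, hij]
      have h4 := fourPoint Q f c hinv B hB K hK hcard {j} (Pi.single j (x j))
        (fun i => if i ∈ S then x i else 0)
        (fun i hi => Pi.single_eq_of_ne (by simpa using hi) _)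
        (fun i hi => by
          have : i = j := by simpa using hi
          simp [this, hj])
      rw [hab] at h4
      rw [Finset.card_insert_of_notMem hj, Finset.prod_insert hj, pow_succ]
      calc f (fun i => if i ∈ insert j S then x i else 0) * ((f 0) ^ S.card * f 0)
          = (f (fun i => if i ∈ insert j S then x i else 0) * f 0) * (f 0) ^ S.card := by ring
        _ = (f (Pi.single j (x j)) * f (fun i => if i ∈ S then x i else 0)) * (f 0) ^ S.card := by
            rw [h4]
        _ = f (Pi.single j (x j)) * (f (fun i => if i ∈ S then x i else 0) * (f 0) ^ S.card) := by
            ring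
        _ = f (Pi.single j (x j)) * (f 0 * ∏ i ∈ S, f (Pi.single i (x i))) := by rw [ih]
        _ = f 0 * (f (Pi.single j (x j)) * ∏ i ∈ S, f (Pi.single i (x i))) := by ring
  have := main Finset.univ
  simpa using this

end FourPoint


lemma mainAux {ι : Type} [Fintype ι] [DecidableEq ι] (ℓ : ℕ) (hℓ : 0 < ℓ)
    (φ : ℤ → ℂ) (hφ0 : ∀ t, φ t ≠ 0) (hφper : ∀ t, φ (t + (ℓ : ℤ)) = φ t)
    (p r : ι → ℕ) (hp : ∀ i, (p i).Prime) (hpinj : Function.Injective p)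
    (h : ι → ℤ → ℂ)
    (hhper : ∀ i t, h i (t + ((p i : ℤ)) ^ (r i)) = h i t)
    (hcover : ∀ q ∈ ℓ.primeFactors, ∃ i, p i = q)
    (hle : ∀ i, ℓ.factorization (p i) ≤ r i)
    (H : ∃ N₀ : ℕ, ∀ N ≥ N₀,
      (((Finset.Icc 1 N).filter fun t : ℕ => φ (t : ℤ) ≠ ∏ i, h i (t : ℤ)).card : ℝ)
        < N / (4 * (ℓ : ℝ) ^ 2)) :
    ∃ ρ : ℂ, ρ ≠ 0 ∧ ∃ H' : ℕ → ℤ → ℂ,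
      (∀ q ∈ ℓ.primeFactors, ∀ t, H' q (t + (q : ℤ) ^ (ℓ.factorization q)) = H' q t) ∧
      ∀ t, φ t = ρ * ∏ q ∈ ℓ.primeFactors, H' q t := by
  classical
  set n : ι → ℕ := fun i => p i ^ r i with hn
  set m : ι → ℕ := fun i => p i ^ (ℓ.factorization (p i)) with hm
  haveI instn : ∀ i, NeZero (n i) := fun i => ⟨pow_ne_zero _ (hp i).pos.ne'⟩
  haveI instm : ∀ i, NeZero (m i) := fun i => ⟨pow_ne_zero _ (hp i).pos.ne'⟩
  have hmn : ∀ i, m i ∣ n i := fun i => pow_dvd_pow (p i) (hle i)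
  set P : ℕ := ∏ i, n i with hP
  have hP0 : 0 < P := Finset.prod_pos fun i _ => pow_pos (hp i).pos _
  haveI instP : NeZero P := ⟨hP0.ne'⟩
  have hco : Pairwise (Function.onFun Nat.Coprime n) := fun i j hij =>
    Nat.coprime_pow_primes _ _ (hp i) (hp j) (fun hpp => hij (hpinj hpp))
  have hcopm : ∀ (a : ι) , a ∈ (Finset.univ : Finset ι) → ∀ b ∈ (Finset.univ : Finset ι),
      a ≠ b → Nat.Coprime (m a) (m b) := fun i _ j _ hij =>
    Nat.coprime_pow_primes _ _ (hp i) (hp j) (fun hpp => hij (hpinj hpp))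
  have hnP : ∀ i, n i ∣ P := fun i => Finset.dvd_prod_of_mem n (Finset.mem_univ i)
  -- ℓ ∣ ∏ m i and ∏ m i ∣ ℓ
  have hmdvd : ∀ i, m i ∣ ℓ := fun i => Nat.ordProj_dvd ℓ (p i)
  have hprodmℓ : (∏ i, m i) ∣ ℓ := auxProdDvd Finset.univ m ℓ hcopm (fun i _ => hmdvd i)
  have hℓm : ℓ ∣ ∏ i, m i := by
    have hself : ∏ q ∈ ℓ.primeFactors, q ^ ℓ.factorization q = ℓ := by
      rw [← Nat.support_factorization]
      exact Nat.factorization_prod_pow_eq_self hℓ.ne'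
    rw [← hself]
    apply auxProdDvd
    · intro q hq q' hq' hqq'
      exact Nat.coprime_pow_primes _ _ (Nat.prime_of_mem_primeFactors hq)
        (Nat.prime_of_mem_primeFactors hq') hqq'
    · intro q hq
      obtain ⟨i, rfl⟩ := hcover q hq
      exact dvd_trans (dvd_refl _) (Finset.dvd_prod_of_mem m (Finset.mem_univ i))
  have hℓP : ℓ ∣ P :=
    hℓm.trans (Finset.prod_dvd_prod_of_dvd _ _ (fun i _ => hmn i))
  -- CRT
  set e := ZMod.prodEquivPi n hco with he
  set lift : (∀ i, ZMod (n i)) → ℕ := fun x => (e.symm x).val with hlift_def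
  have hcomp : ∀ (w : ZMod P) (i : ι),
      e w i = ZMod.castHom (hnP i) (ZMod (n i)) w := by
    intro w i
    have heq : (Pi.evalRingHom (fun i => ZMod (n i)) i).comp (e : ZMod P →+* ∀ i, ZMod (n i))
        = ZMod.castHom (hnP i) (ZMod (n i)) := RingHom.ext_zmod _ _
    exact RingHom.congr_fun heq w
  have hlift : ∀ (x : ∀ i, ZMod (n i)) (i : ι), ((lift x : ℕ) : ZMod (n i)) = x i := by
    intro x i
    have h1 : ((lift x : ℕ) : ZMod P) = e.symm x := by
      simp only [hlift_def, ZMod.natCast_val, ZMod.cast_id]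
    calc ((lift x : ℕ) : ZMod (n i))
        = ZMod.castHom (hnP i) (ZMod (n i)) ((lift x : ℕ) : ZMod P) := by
          rw [map_natCast]
      _ = e (e.symm x) i := by rw [h1, ← hcomp]
      _ = x i := by rw [RingEquiv.apply_symm_apply]
  -- the key periodicity fact
  have hFkey : ∀ a b : ℤ, (∀ i, ((a : ZMod (m i))) = ((b : ZMod (m i)))) → φ a = φ b := by
    intro a b hab
    have hdvd : (ℓ : ℤ) ∣ a - b := by
      have hnat : (∏ i, m i) ∣ (a - b).natAbs := by
        apply auxProdDvd Finset.univ m _ hcopm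
        intro i _
        have := (ZMod.intCast_eq_intCast_iff _ _ _).mp (hab i)
        have hd : ((m i : ℤ)) ∣ a - b := Int.ModEq.dvd this.symm
        exact Int.natCast_dvd.mp hd
      have h2 : ((∏ i, m i : ℕ) : ℤ) ∣ a - b := Int.natCast_dvd.mpr hnat
      exact dvd_trans (Int.natCast_dvd_natCast.mpr hℓm) h2
    have := auxPerDvd φ ℓ hφper hdvd b
    simpa using this
  -- descended functions
  set F : (∀ i, ZMod (n i)) → ℂ := fun x => φ (lift x) with hF
  set C : ∀ i, ZMod (n i) → ℂ := fun i z => h i ((z.val : ℤ)) with hC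
  set Q : ∀ i, ZMod (n i) →+ ZMod (m i) :=
    fun i => (ZMod.castHom (hmn i) (ZMod (m i))).toAddMonoidHom with hQ
  have hQapp : ∀ (i : ι) (z : ZMod (n i)), Q i z = ZMod.castHom (hmn i) (ZMod (m i)) z :=
    fun i z => rfl
  have hQlift : ∀ (x : ∀ i, ZMod (n i)) (i : ι), Q i (x i) = ((lift x : ℕ) : ZMod (m i)) := by
    intro x i
    rw [← hlift x i, hQapp, map_natCast]
  have hinv : ∀ x y : ∀ i, ZMod (n i), (∀ i, Q i (x i) = Q i (y i)) → F x = F y := by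
    intro x y hxy
    apply hFkey
    intro i
    have := hxy i
    rw [hQlift, hQlift] at this
    exact_mod_cast this
  -- bad sets
  set B : Finset (∀ i, ZMod (n i)) :=
    Finset.univ.filter (fun x => F x ≠ ∏ i, C i (x i)) with hB
  set K : Finset (∀ i, ZMod (n i)) :=
    Finset.univ.filter (fun z => ∀ i, Q i (z i) = 0) with hKdef
  have hBmem : ∀ x, x ∉ B → F x = ∏ i, C i (x i) := by
    intro x hx
    by_contra hne
    exact hx (Finset.mem_filter.mpr ⟨Finset.mem_univ x, hne⟩)
  have hKmem : ∀ z, z ∈ K ↔ ∀ i, Q i (z i) = 0 := by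
    intro z
    simp [hKdef]
  -- counting
  set Bad : ℕ → Prop := fun t => φ (t : ℤ) ≠ ∏ i, h i (t : ℤ) with hBadDef
  have hφP : ∀ (t : ℤ) (d : ℤ), ((P : ℤ)) ∣ d → φ (t + d) = φ t := by
    intro t d hd
    exact auxPerDvd φ ℓ hφper (dvd_trans (Int.natCast_dvd_natCast.mpr hℓP) hd) t
  have hhn : ∀ (i : ι) (t d : ℤ), ((n i : ℤ)) ∣ d → h i (t + d) = h i t := by
    intro i t d hd
    have : ∀ s, h i (s + ((n i : ℕ) : ℤ)) = h i s := by
      intro s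
      have := hhper i s
      simpa [hn] using this
    exact auxPerDvd (h i) (n i) this hd t
  have hBadper : ∀ t : ℕ, Bad (t + P) ↔ Bad t := by
    intro t
    have h1 : φ (((t + P : ℕ)) : ℤ) = φ (t : ℤ) := by
      push_cast
      exact hφP t P dvd_rfl
    have h2 : ∀ i, h i (((t + P : ℕ)) : ℤ) = h i (t : ℤ) := by
      intro i
      push_cast
      exact hhn i t P (Int.natCast_dvd_natCast.mpr (hnP i))
    constructor
    · intro hb hcon
      apply hb
      rw [h1, hcon]
      exact Finset.prod_congr rfl fun i _ => (h2 i).symm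
    · intro hb hcon
      apply hb
      rw [← h1, hcon]
      exact Finset.prod_congr rfl fun i _ => h2 i
  obtain ⟨N₀, hN₀⟩ := H
  set M : ℕ := N₀ + 1 with hM
  set c₀ : ℕ := ((Finset.Ioc 0 P).filter Bad).card with hc₀
  have hIccIoc : ∀ N : ℕ, Finset.Icc 1 N = Finset.Ioc 0 N := fun N => by
    rw [show (1 : ℕ) = 0 + 1 from rfl, Finset.Icc_add_one_left_eq_Ioc]
  have hcount : ((Finset.Icc 1 (P * M)).filter Bad).card = M * c₀ := by
    rw [hIccIoc]
    exact auxCount P Bad hBadper M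
  have hc₀bound : 4 * ℓ ^ 2 * c₀ < P := by
    have hge : P * M ≥ N₀ := le_trans (by omega : N₀ ≤ M) (Nat.le_mul_of_pos_left M hP0)
    have := hN₀ (P * M) hge
    rw [hcount] at this
    have hMpos : (0 : ℝ) < M := by positivity
    have h4pos : (0 : ℝ) < 4 * (ℓ : ℝ) ^ 2 := by positivity
    rw [lt_div_iff₀ h4pos] at this
    push_cast at this
    have hreal : (4 : ℝ) * (ℓ : ℝ) ^ 2 * (c₀ : ℝ) < P := by nlinarith
    exact_mod_cast hreal
  -- B.card ≤ c₀
  have hClC : ∀ (x : ∀ i, ZMod (n i)) (i : ι), C i (x i) = h i ((lift x : ℤ)) := by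
    intro x i
    have hval : (x i).val = lift x % n i := by
      rw [← hlift x i, ZMod.val_natCast]
    have hnat : lift x = (x i).val + n i * (lift x / n i) := by
      rw [hval]
      exact (Nat.mod_add_div _ _).symm
    have hint : ((lift x : ℕ) : ℤ) = ((x i).val : ℤ) + (n i : ℤ) * ((lift x / n i : ℕ) : ℤ) := by
      exact_mod_cast congrArg (Nat.cast : ℕ → ℤ) hnat
    rw [hC]
    show h i ((x i).val : ℤ) = h i ((lift x : ℕ) : ℤ)
    rw [hint]
    exact (hhn i _ _ ⟨_, rfl⟩).symm
  have hliftinj : Function.Injective lift := by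
    intro x y hxy
    have : e.symm x = e.symm y := by
      have hx : ((lift x : ℕ) : ZMod P) = e.symm x := by
        simp only [hlift_def, ZMod.natCast_val, ZMod.cast_id]
      have hy : ((lift y : ℕ) : ZMod P) = e.symm y := by
        simp only [hlift_def, ZMod.natCast_val, ZMod.cast_id]
      rw [← hx, ← hy, hxy]
    exact e.symm.injective this
  have hliftlt : ∀ x, lift x < P := fun x => ZMod.val_lt _
  have hBc : B.card ≤ c₀ := by
    apply Finset.card_le_card_of_injOn (fun x => if lift x = 0 then P else lift x)
    · intro x hx
      have hxB : F x ≠ ∏ i, C i (x i) := (Finset.mem_filter.mp hx).2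
      have hBadlift : Bad (lift x) := by
        intro hcon
        apply hxB
        show φ ((lift x : ℕ) : ℤ) = _
        rw [hcon]
        exact Finset.prod_congr rfl fun i _ => (hClC x i).symm
      simp only [Finset.mem_coe, Finset.mem_filter, Finset.mem_Ioc]
      by_cases h0 : lift x = 0
      · simp only [h0, if_pos]
        refine ⟨⟨hP0, le_refl P⟩, ?_⟩
        have := (hBadper 0).mpr (by rwa [h0] at hBadlift)
        simpa using this
      · simp only [h0, if_neg, if_false]
        exact ⟨⟨Nat.pos_of_ne_zero h0, (hliftlt x).le⟩, hBadlift⟩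
    · intro x _ y _ hxy
      simp only at hxy
      by_cases h0x : lift x = 0 <;> by_cases h0y : lift y = 0
      · exact hliftinj (by rw [h0x, h0y])
      · rw [if_pos h0x, if_neg h0y] at hxy
        exact absurd hxy.symm (Nat.ne_of_lt (hliftlt y))
      · rw [if_neg h0x, if_pos h0y] at hxy
        exact absurd hxy (Nat.ne_of_lt (hliftlt x))
      · rw [if_neg h0x, if_neg h0y] at hxy
        exact hliftinj hxy
  -- cardinality of the ambient group and of K
  have hcardG : Fintype.card (∀ i, ZMod (n i)) = P := by
    rw [Fintype.card_pi]
    exact Finset.prod_congr rfl fun i _ => ZMod.card (n i)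
  have hcardG' : Fintype.card (∀ i, ZMod (m i)) = ∏ i, m i := by
    rw [Fintype.card_pi]
    exact Finset.prod_congr rfl fun i _ => ZMod.card (m i)
  have hG'le : Fintype.card (∀ i, ZMod (m i)) ≤ ℓ := by
    rw [hcardG']
    exact Nat.le_of_dvd hℓ hprodmℓ
  have hGle : Fintype.card (∀ i, ZMod (n i)) ≤ Fintype.card (∀ i, ZMod (m i)) * K.card := by
    have := Finset.card_le_card_of_injOn
      (f := fun x : ∀ i, ZMod (n i) =>
        ((fun i => Q i (x i)), x - (fun i => (((Q i (x i)).val : ℕ) : ZMod (n i)))))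
      (s := Finset.univ) (t := Finset.univ ×ˢ K) ?_ ?_
    · simpa [Finset.card_product] using this
    · intro x _
      rw [Finset.mem_coe, Finset.mem_product]
      refine ⟨Finset.mem_univ _, ?_⟩
      rw [hKmem]
      intro i
      have hqq : Q i ((((Q i (x i)).val : ℕ) : ZMod (n i))) = Q i (x i) := by
        rw [hQapp i ((((Q i (x i)).val : ℕ) : ZMod (n i))), map_natCast,
          ZMod.natCast_val, ZMod.cast_id]
      simp only [Pi.sub_apply, map_sub, hqq, sub_self]
    · intro x _ y _ hxy
      simp only [Prod.mk.injEq] at hxy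
      have h1 : ∀ i, Q i (x i) = Q i (y i) := fun i => congrFun hxy.1 i
      have h2 := hxy.2
      have h3 : (fun i => (((Q i (x i)).val : ℕ) : ZMod (n i)))
          = (fun i => (((Q i (y i)).val : ℕ) : ZMod (n i))) :=
        funext fun i => by rw [h1 i]
      rw [h3] at h2
      exact sub_left_inj.mp h2
  have hKbound : 4 * B.card < K.card := by
    have h1 : 4 * ℓ ^ 2 * B.card < P :=
      lt_of_le_of_lt (Nat.mul_le_mul_left _ hBc) hc₀bound
    have h2 : P ≤ ℓ * K.card := by
      calc P = Fintype.card (∀ i, ZMod (n i)) := hcardG.symm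
        _ ≤ Fintype.card (∀ i, ZMod (m i)) * K.card := hGle
        _ ≤ ℓ * K.card := Nat.mul_le_mul_right _ hG'le
    by_contra hcon
    push_neg at hcon
    have h3 : ℓ * K.card ≤ ℓ * (4 * B.card) := Nat.mul_le_mul_left _ hcon
    have h4 : ℓ * (4 * B.card) ≤ ℓ ^ 2 * (4 * B.card) := by
      apply Nat.mul_le_mul_right
      calc ℓ = ℓ * 1 := (mul_one ℓ).symm
        _ ≤ ℓ * ℓ := Nat.mul_le_mul_left _ hℓ
        _ = ℓ ^ 2 := (sq ℓ).symm
    have : 4 * ℓ ^ 2 * B.card < ℓ ^ 2 * (4 * B.card) := by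
      calc 4 * ℓ ^ 2 * B.card < P := h1
        _ ≤ ℓ * K.card := h2
        _ ≤ ℓ * (4 * B.card) := h3
        _ ≤ ℓ ^ 2 * (4 * B.card) := h4
    rw [show ℓ ^ 2 * (4 * B.card) = 4 * ℓ ^ 2 * B.card by ring] at this
    exact lt_irrefl _ this
  -- tensor decomposition
  have htensor := tensorDecomp Q F C hinv B hBmem K hKmem hKbound
  set cc : ℂ := F 0 with hcc
  have hc0 : cc ≠ 0 := hφ0 _
  set s : Finset ι := Finset.univ.filter (fun i => p i ∈ ℓ.primeFactors) with hs
  have hm1 : ∀ i, i ∉ s → m i = 1 := by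
    intro i hi
    have hnotmem : p i ∉ ℓ.primeFactors := by
      intro hmem
      exact hi (Finset.mem_filter.mpr ⟨Finset.mem_univ i, hmem⟩)
    have h0 : ℓ.factorization (p i) = 0 := by
      rw [← Nat.support_factorization] at hnotmem
      exact Finsupp.notMem_support_iff.mp hnotmem
    rw [hm]
    simp [h0]
  have hsingle0 : ∀ i, i ∉ s → ∀ v : ZMod (n i), F (Pi.single i v) = F 0 := by
    intro i hi v
    apply hinv
    intro j
    by_cases hij : j = i
    · subst hij
      haveI : Subsingleton (ZMod (m j)) := by
        rw [hm1 j hi]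
        infer_instance
      exact Subsingleton.elim _ _
    · rw [Pi.single_eq_of_ne hij, Pi.zero_apply]
  have hFπ : ∀ t : ℤ, F (fun i => ((t : ℤ) : ZMod (n i))) = φ t := by
    intro t
    have key : ∀ i : ι, (((lift (fun i => ((t : ℤ) : ZMod (n i))) : ℕ) : ℤ) : ZMod (m i))
        = ((t : ℤ) : ZMod (m i)) := by
      intro i
      have h1 := congrArg (ZMod.castHom (hmn i) (ZMod (m i)))
        (hlift (fun i => ((t : ℤ) : ZMod (n i))) i)
      rw [map_natCast, map_intCast] at h1
      rw [Int.cast_natCast]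
      exact h1
    exact hFkey _ t key
  set H' : ℕ → ℤ → ℂ :=
    fun q t => F (fun j => if p j = q then ((t : ℤ) : ZMod (n j)) else 0) with hH'
  have hH'per : ∀ q ∈ ℓ.primeFactors, ∀ t : ℤ,
      H' q (t + (q : ℤ) ^ (ℓ.factorization q)) = H' q t := by
    intro q hq t
    apply hinv
    intro j
    by_cases hj : p j = q
    · simp only [hj, if_pos]
      rw [hQapp, hQapp, map_intCast, map_intCast]
      have hmj : m j = q ^ ℓ.factorization q := by rw [hm]; simp [hj]
      have hz : (((q ^ ℓ.factorization q : ℕ) : ℤ) : ZMod (m j)) = 0 := by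
        rw [hmj, show (((q ^ ℓ.factorization q : ℕ) : ℤ) : ZMod (q ^ ℓ.factorization q))
          = ((q ^ ℓ.factorization q : ℕ) : ZMod (q ^ ℓ.factorization q)) from by push_cast; rfl]
        exact ZMod.natCast_self _
      rw [show ((t + (q : ℤ) ^ ℓ.factorization q : ℤ) : ZMod (m j))
          = ((t : ℤ) : ZMod (m j)) + (((q ^ ℓ.factorization q : ℕ) : ℤ) : ZMod (m j)) from by
        push_cast; ring]
      rw [hz, add_zero]
    · simp only [hj, if_neg, if_false]
  refine ⟨cc * cc ^ (Fintype.card ι - s.card) / cc ^ (Fintype.card ι), ?_, H', hH'per, ?_⟩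
  · exact div_ne_zero (mul_ne_zero hc0 (pow_ne_zero _ hc0)) (pow_ne_zero _ hc0)
  intro t
  have ht := htensor (fun i => ((t : ℤ) : ZMod (n i)))
  rw [hFπ t] at ht
  have hsplit : (∏ i, F (Pi.single i ((t : ℤ) : ZMod (n i))))
      = (∏ i ∈ s, F (Pi.single i ((t : ℤ) : ZMod (n i)))) * cc ^ (Fintype.card ι - s.card) := by
    rw [← Finset.prod_mul_prod_compl s]
    congr 1
    rw [← Finset.card_compl]
    rw [Finset.prod_congr rfl (fun i hi => hsingle0 i (by simpa using hi) _)]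
    exact Finset.prod_const cc
  have hreindex : (∏ i ∈ s, F (Pi.single i ((t : ℤ) : ZMod (n i))))
      = ∏ q ∈ ℓ.primeFactors, H' q t := by
    apply Finset.prod_bij (fun i _ => p i)
    · intro i hi
      exact (Finset.mem_filter.mp hi).2
    · intro i hi j hj hij
      exact hpinj hij
    · intro q hq
      obtain ⟨i, rfl⟩ := hcover q hq
      exact ⟨i, Finset.mem_filter.mpr ⟨Finset.mem_univ i, hq⟩, rfl⟩
    · intro i hi
      rw [hH']
      show F (Pi.single i ((t : ℤ) : ZMod (n i)))
        = F (fun j => if p j = p i then ((t : ℤ) : ZMod (n j)) else 0)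
      congr 1
      funext j
      by_cases hij : j = i
      · subst hij
        simp
      · rw [Pi.single_eq_of_ne hij, if_neg (fun hpp => hij (hpinj hpp))]
    done
  rw [hsplit, hreindex] at ht
  have hckne : cc ^ (Fintype.card ι) ≠ 0 := pow_ne_zero _ hc0
  rw [div_mul_eq_mul_div, eq_div_iff hckne]
  calc φ t * cc ^ (Fintype.card ι)
      = cc * ((∏ q ∈ ℓ.primeFactors, H' q t) * cc ^ (Fintype.card ι - s.card)) := ht
    _ = cc * cc ^ (Fintype.card ι - s.card) * ∏ q ∈ ℓ.primeFactors, H' q t := by ring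

theorem periodic_prime_factorization (ℓ : ℕ) (hℓ : 0 < ℓ)
    (φ : ℤ → ℂ) (hφ0 : ∀ t, φ t ≠ 0) (hφper : ∀ t, φ (t + ℓ) = φ t)
    (g : ℕ) (p : Fin g → ℕ) (r : Fin g → ℕ)
    (hp : ∀ i, (p i).Prime) (hpinj : Function.Injective p)
    (h : Fin g → ℤ → ℂ) (hh0 : ∀ i t, h i t ≠ 0)
    (hhper : ∀ i t, h i (t + (p i) ^ (r i)) = h i t)
    (H : ∀ᶠ N : ℕ in atTop,
      (((Finset.Icc 1 N).filter
        fun t : ℕ => φ (t : ℤ) ≠ ∏ i, h i (t : ℤ)).card : ℝ) < N / (4 * (ℓ : ℝ) ^ 2)) :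
    ∃ ρ : ℂ, ρ ≠ 0 ∧ ∃ H' : ℕ → ℤ → ℂ,
      (∀ q ∈ ℓ.primeFactors, ∀ t, H' q (t + (q : ℤ) ^ (ℓ.factorization q)) = H' q t) ∧
      ∀ t, φ t = ρ * ∏ q ∈ ℓ.primeFactors, H' q t := by
  classical
  set sbad : Finset ℕ := ℓ.primeFactors.filter (fun q => ∀ i, p i ≠ q) with hsbad
  set p' : (Fin g ⊕ {q : ℕ // q ∈ sbad}) → ℕ := Sum.elim p (fun q => q.1) with hp'def
  set r' : (Fin g ⊕ {q : ℕ // q ∈ sbad}) → ℕ :=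
    Sum.elim (fun i => max (r i) (ℓ.factorization (p i))) (fun q => ℓ.factorization q.1) with hr'def
  set h' : (Fin g ⊕ {q : ℕ // q ∈ sbad}) → ℤ → ℂ := Sum.elim h (fun _ _ => 1) with hh'def
  have hp' : ∀ i, (p' i).Prime := by
    rintro (i | q)
    · exact hp i
    · exact Nat.prime_of_mem_primeFactors (Finset.mem_filter.mp q.2).1
  have hpinj' : Function.Injective p' := by
    rintro (i | q) (j | q') hij
    · exact congrArg Sum.inl (hpinj hij)
    · exact ((Finset.mem_filter.mp q'.2).2 i (show p i = q'.1 from hij)).elim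
    · exact ((Finset.mem_filter.mp q.2).2 j (show p j = q.1 from hij.symm)).elim
    · exact congrArg Sum.inr (Subtype.ext hij)
  have hhper' : ∀ i t, h' i (t + ((p' i : ℤ)) ^ (r' i)) = h' i t := by
    rintro (i | q) t
    · show h i (t + ((p i : ℤ)) ^ max (r i) (ℓ.factorization (p i))) = h i t
      have hdvd : ((p i : ℤ)) ^ (r i) ∣ ((p i : ℤ)) ^ max (r i) (ℓ.factorization (p i)) :=
        pow_dvd_pow _ (le_max_left _ _)
      have hper : ∀ s, h i (s + (((p i ^ r i : ℕ)) : ℤ)) = h i s := by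
        intro s
        have := hhper i s
        push_cast at this ⊢
        exact this
      have := auxPerDvd (h i) (p i ^ r i) hper (by push_cast; exact hdvd) t
      exact this
    · rfl
  have hcover : ∀ q ∈ ℓ.primeFactors, ∃ i, p' i = q := by
    intro q hq
    by_cases hex : ∃ i, p i = q
    · obtain ⟨i, hi⟩ := hex
      exact ⟨Sum.inl i, hi⟩
    · push_neg at hex
      exact ⟨Sum.inr ⟨q, Finset.mem_filter.mpr ⟨hq, hex⟩⟩, rfl⟩
  have hle : ∀ i, ℓ.factorization (p' i) ≤ r' i := by
    rintro (i | q)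
    · exact le_max_right _ _
    · exact le_refl _
  have hprodeq : ∀ t : ℤ, ∏ i, h' i t = ∏ i, h i t := by
    intro t
    rw [Fintype.prod_sum_type]
    simp [hh'def]
  have H' : ∃ N₀ : ℕ, ∀ N ≥ N₀,
      (((Finset.Icc 1 N).filter fun t : ℕ => φ (t : ℤ) ≠ ∏ i, h' i (t : ℤ)).card : ℝ)
        < N / (4 * (ℓ : ℝ) ^ 2) := by
    obtain ⟨N₀, hN₀⟩ := eventually_atTop.mp H
    refine ⟨N₀, fun N hN => ?_⟩
    have hfeq : ((Finset.Icc 1 N).filter fun t : ℕ => φ (t : ℤ) ≠ ∏ i, h' i (t : ℤ))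
        = ((Finset.Icc 1 N).filter fun t : ℕ => φ (t : ℤ) ≠ ∏ i, h i (t : ℤ)) := by
      apply Finset.filter_congr
      intro t _
      rw [hprodeq]
    rw [hfeq]
    exact hN₀ N hN
  exact mainAux ℓ hℓ φ hφ0 hφper p' r' hp' hpinj' h' hhper' hcover hle H'
end

section
/- Let p be a prime, and let ℓ, u ≥ 1 and 0 ≤ m ≤ p^ℓ be integers. Then there exist arbitrarily large integers r ≥ 0 and a polynomial P ∈ ℤ[t] such that the number of residue classes t modulo p^{r+ℓ} with p^{r+ℓ} dividing P(t) is exactly m·p^r, and v_p(P(t)) ≤ r + ℓ − u whenever t is not in one of these residue classes. -/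
open Finset Polynomial

namespace PZD

lemma mod_pow_succ_eq (p m n : ℕ) :
    m % p ^ (n + 1) = m % p ^ n + p ^ n * (m / p ^ n % p) := by
  have h1 : m % (p ^ n * p) / p ^ n = m / p ^ n % p := Nat.mod_mul_right_div_self m (p ^ n) p
  have h2 : m % (p ^ n * p) % p ^ n = m % p ^ n := Nat.mod_mod_of_dvd m ⟨p, rfl⟩
  have h3 := Nat.div_add_mod (m % (p ^ n * p)) (p ^ n)
  rw [pow_succ]
  rw [← h3, h1, h2]
  exact Nat.add_comm _ _

lemma digit_sum (p m : ℕ) : ∀ n, ∑ i ∈ range n, m / p ^ i % p * p ^ i = m % p ^ n := by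
  intro n
  induction n with
  | zero => simp [Nat.mod_one]
  | succ n ih =>
    rw [Finset.sum_range_succ, ih, mod_pow_succ_eq]
    ring

lemma count_class (p : ℕ) (hp : 0 < p) (d R : ℕ) (hdR : d ≤ R) (z : ℤ) :
    ((range (p ^ R)).filter (fun t : ℕ => (p : ℤ) ^ d ∣ (t : ℤ) - z)).card = p ^ (R - d) := by
  have hq0 : (0 : ℤ) < (p : ℤ) ^ d := by positivity
  have hqz : ((p ^ d : ℕ) : ℤ) = (p : ℤ) ^ d := by push_cast; rfl
  set a₀ : ℕ := (z % (p : ℤ) ^ d).toNat with ha₀def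
  have ha₀ : (a₀ : ℤ) = z % (p : ℤ) ^ d :=
    Int.toNat_of_nonneg (Int.emod_nonneg z (ne_of_gt hq0))
  have ha₀q : a₀ < p ^ d := by
    have h := Int.emod_lt_of_pos z hq0
    rw [← ha₀, ← hqz] at h
    exact_mod_cast h
  have hpow : p ^ (R - d) * p ^ d = p ^ R := by
    rw [← pow_add]
    congr 1
    omega
  have himg : (range (p ^ R)).filter (fun t : ℕ => (p : ℤ) ^ d ∣ (t : ℤ) - z)
      = (range (p ^ (R - d))).image (fun s => a₀ + s * p ^ d) := by
    ext t
    simp only [mem_filter, mem_range, mem_image]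
    constructor
    · rintro ⟨hlt, hdvd⟩
      have hmod : (t : ℤ) % (p : ℤ) ^ d = z % (p : ℤ) ^ d := by
        have := (Int.modEq_iff_dvd.mpr hdvd : z ≡ (t : ℤ) [ZMOD (p : ℤ) ^ d])
        exact this.symm
      have hmodN : t % p ^ d = a₀ := by
        have : ((t % p ^ d : ℕ) : ℤ) = (a₀ : ℤ) := by
          rw [Int.natCast_mod, hqz, hmod, ha₀]
        exact_mod_cast this
      refine ⟨t / p ^ d, ?_, ?_⟩
      · rw [Nat.div_lt_iff_lt_mul (by positivity)]
        rw [hpow]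
        exact hlt
      · conv_rhs => rw [← Nat.mod_add_div' t (p ^ d)]
        rw [hmodN]
    · rintro ⟨s, hs, rfl⟩
      constructor
      · calc a₀ + s * p ^ d < (s + 1) * p ^ d := by nlinarith
          _ ≤ p ^ (R - d) * p ^ d := Nat.mul_le_mul_right _ (by omega)
          _ = p ^ R := hpow
      · have : ((a₀ + s * p ^ d : ℕ) : ℤ) - z = (p : ℤ) ^ d * ((s : ℤ) - z / (p : ℤ) ^ d) := by
          push_cast
          rw [ha₀, Int.emod_def]
          ring
        rw [this]
        exact Dvd.intro _ rfl
  rw [himg, Finset.card_image_of_injective _ ?_, card_range]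
  intro s s' h
  simp only at h
  have : s * p ^ d = s' * p ^ d := by omega
  exact Nat.eq_of_mul_eq_mul_right (by positivity) this

/-! ### Definitions for the main construction -/

def dig (p m i : ℕ) : ℕ := m / p ^ i % p

def kk (p ℓ u i : ℕ) : ℕ := u * (2 * p * ℓ + 1) ^ i

def aa (p ℓ m i j : ℕ) : ℤ :=
  (∑ s ∈ Ico (i + 1) ℓ, (dig p m s : ℤ) * (p : ℤ) ^ (ℓ - 1 - s)) + (j : ℤ) * (p : ℤ) ^ (ℓ - 1 - i)

def II (p ℓ m : ℕ) : Finset ((_ : ℕ) × ℕ) := (range ℓ).sigma fun i => range (dig p m i)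

def sg (p ℓ u m i : ℕ) : ℕ := ∑ y ∈ II p ℓ m, kk p ℓ u y.1 * (ℓ - 1 - max i y.1)

lemma dig_lt (p m i : ℕ) (hp : 0 < p) : dig p m i < p := Nat.mod_lt _ hp

lemma mem_II {p ℓ m : ℕ} {x : (_ : ℕ) × ℕ} :
    x ∈ II p ℓ m ↔ x.1 < ℓ ∧ x.2 < dig p m x.1 := by
  simp [II, Finset.mem_sigma]

lemma II_nonempty (p ℓ m : ℕ) (hp : 0 < p) (hm : 0 < m) (hmlt : m < p ^ ℓ) :
    (II p ℓ m).Nonempty := by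
  rw [II, Finset.sigma_nonempty]
  by_contra hc
  push_neg at hc
  have hz : ∀ i ∈ range ℓ, m / p ^ i % p * p ^ i = 0 := by
    intro i hi
    have := hc i hi
    rw [Finset.range_eq_empty_iff] at this
    simp [dig] at this
    simp [this]
  have hsum := digit_sum p m ℓ
  rw [Finset.sum_eq_zero hz, Nat.mod_eq_of_lt hmlt] at hsum
  omega

lemma pairdiff_eqcase (p ℓ m : ℕ) (hp : p.Prime) {i j j' : ℕ}
    (hj : j < dig p m i) (hj' : j' < dig p m i) (hjj : j ≠ j') :
    ∃ e : ℤ, aa p ℓ m i j - aa p ℓ m i j' = (p : ℤ) ^ (ℓ - 1 - i) * e ∧ ¬ (p : ℤ) ∣ e := by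
  refine ⟨(j : ℤ) - j', by unfold aa; ring, ?_⟩
  intro hd
  have habs : (p : ℤ) ∣ |(j : ℤ) - j'| := (dvd_abs _ _).mpr hd
  have hne : (j : ℤ) - j' ≠ 0 := sub_ne_zero.mpr (by exact_mod_cast hjj)
  have hle := Int.le_of_dvd (abs_pos.mpr hne) habs
  have hjp : j < p := lt_of_lt_of_le hj (dig_lt p m i hp.pos).le
  have hj'p : j' < p := lt_of_lt_of_le hj' (dig_lt p m i hp.pos).le
  have : |(j : ℤ) - j'| < p := by
    rw [abs_lt]
    constructor <;> push_cast <;> omega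
  omega

lemma pairdiff_ltcase (p ℓ m : ℕ) (hp : p.Prime) {i j i' j' : ℕ}
    (hi' : i' < ℓ) (hii : i < i') (hj' : j' < dig p m i') :
    ∃ e : ℤ, aa p ℓ m i j - aa p ℓ m i' j' = (p : ℤ) ^ (ℓ - 1 - i') * e ∧ ¬ (p : ℤ) ∣ e := by
  refine ⟨((dig p m i' : ℤ) - j') + ((∑ s ∈ Ico (i + 1) i', (dig p m s : ℤ) * (p : ℤ) ^ (i' - s))
      + (j : ℤ) * (p : ℤ) ^ (i' - i)), ?_, ?_⟩
  · unfold aa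
    have h1 : ∑ s ∈ Ico (i + 1) ℓ, (dig p m s : ℤ) * (p : ℤ) ^ (ℓ - 1 - s)
        = ∑ s ∈ Ico (i + 1) (i' + 1), (dig p m s : ℤ) * (p : ℤ) ^ (ℓ - 1 - s)
          + ∑ s ∈ Ico (i' + 1) ℓ, (dig p m s : ℤ) * (p : ℤ) ^ (ℓ - 1 - s) :=
      (Finset.sum_Ico_consecutive _ (by omega) (by omega)).symm
    have h2 : ∑ s ∈ Ico (i + 1) (i' + 1), (dig p m s : ℤ) * (p : ℤ) ^ (ℓ - 1 - s)
        = ∑ s ∈ Ico (i + 1) i', (dig p m s : ℤ) * (p : ℤ) ^ (ℓ - 1 - s)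
          + (dig p m i' : ℤ) * (p : ℤ) ^ (ℓ - 1 - i') :=
      Finset.sum_Ico_succ_top (by omega) _
    have h3 : ∀ s ∈ Ico (i + 1) i', (dig p m s : ℤ) * (p : ℤ) ^ (ℓ - 1 - s)
        = (p : ℤ) ^ (ℓ - 1 - i') * ((dig p m s : ℤ) * (p : ℤ) ^ (i' - s)) := by
      intro s hs
      rw [mem_Ico] at hs
      rw [show ℓ - 1 - s = (ℓ - 1 - i') + (i' - s) by omega, pow_add]
      ring
    have h4 : (p : ℤ) ^ (ℓ - 1 - i) = (p : ℤ) ^ (ℓ - 1 - i') * (p : ℤ) ^ (i' - i) := by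
      rw [← pow_add]
      congr 1
      omega
    rw [h1, h2, Finset.sum_congr rfl h3, ← Finset.mul_sum, h4]
    ring
  · intro hd
    have hdvd2 : (p : ℤ) ∣ (∑ s ∈ Ico (i + 1) i', (dig p m s : ℤ) * (p : ℤ) ^ (i' - s))
        + (j : ℤ) * (p : ℤ) ^ (i' - i) := by
      apply dvd_add
      · exact Finset.dvd_sum fun s hs =>
          Dvd.dvd.mul_left (dvd_pow_self (p : ℤ) (by rw [mem_Ico] at hs; omega)) _
      · exact Dvd.dvd.mul_left (dvd_pow_self (p : ℤ) (by omega)) _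
    have hdig : (p : ℤ) ∣ (dig p m i' : ℤ) - j' := by
      have := dvd_sub hd hdvd2
      simpa using this
    have h5 := Int.le_of_dvd (by push_cast; omega) hdig
    have h6 : (dig p m i' : ℤ) < p := by exact_mod_cast dig_lt p m i' hp.pos
    omega

lemma pairdiff (p ℓ m : ℕ) (hp : p.Prime) {x y : (_ : ℕ) × ℕ}
    (hx : x ∈ II p ℓ m) (hy : y ∈ II p ℓ m) (hxy : x ≠ y) :
    ∃ e : ℤ, aa p ℓ m x.1 x.2 - aa p ℓ m y.1 y.2 = (p : ℤ) ^ (ℓ - 1 - max x.1 y.1) * e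
      ∧ ¬ (p : ℤ) ∣ e := by
  rw [mem_II] at hx hy
  obtain ⟨x1, x2⟩ := x
  obtain ⟨y1, y2⟩ := y
  simp only at hx hy ⊢
  rcases lt_trichotomy x1 y1 with h | h | h
  · rw [max_eq_right h.le]
    exact pairdiff_ltcase p ℓ m hp hy.1 h hy.2
  · subst h
    have hj : x2 ≠ y2 := fun hc => hxy (by rw [hc])
    rw [max_self]
    exact pairdiff_eqcase p ℓ m hp hx.2 hy.2 hj
  · rw [max_eq_left h.le]
    obtain ⟨e, he, hnd⟩ := pairdiff_ltcase p ℓ m hp hx.1 h hx.2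
    exact ⟨-e, by linear_combination -he, by rwa [dvd_neg]⟩

lemma geo0 (p ℓ u : ℕ) (hp : 1 ≤ p) :
    ∀ i, (∑ s ∈ range i, (p - 1) * ℓ * (u * (2 * p * ℓ + 1) ^ s)) + u ≤ u * (2 * p * ℓ + 1) ^ i := by
  intro i
  induction i with
  | zero => simp
  | succ i ih =>
    calc (∑ s ∈ range (i + 1), (p - 1) * ℓ * (u * (2 * p * ℓ + 1) ^ s)) + u
        = ((∑ s ∈ range i, (p - 1) * ℓ * (u * (2 * p * ℓ + 1) ^ s)) + u)
          + (p - 1) * ℓ * (u * (2 * p * ℓ + 1) ^ i) := by rw [sum_range_succ]; ring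
      _ ≤ u * (2 * p * ℓ + 1) ^ i + (p - 1) * ℓ * (u * (2 * p * ℓ + 1) ^ i) :=
          Nat.add_le_add_right ih _
      _ = ((p - 1) * ℓ + 1) * (u * (2 * p * ℓ + 1) ^ i) := by ring
      _ ≤ (2 * p * ℓ + 1) * (u * (2 * p * ℓ + 1) ^ i) := by
          apply Nat.mul_le_mul_right
          have : (p - 1) * ℓ ≤ 2 * p * ℓ := Nat.mul_le_mul_right ℓ (by omega)
          omega
      _ = u * (2 * p * ℓ + 1) ^ (i + 1) := by rw [pow_succ]; ring

lemma geo (p ℓ u m : ℕ) (hp : 0 < p) {i : ℕ} (hi : i < ℓ) :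
    (∑ y ∈ II p ℓ m, kk p ℓ u y.1 * (i - y.1)) + u ≤ kk p ℓ u i := by
  have h1 : ∑ y ∈ II p ℓ m, kk p ℓ u y.1 * (i - y.1)
      = ∑ s ∈ range ℓ, dig p m s * (kk p ℓ u s * (i - s)) := by
    rw [II, Finset.sum_sigma]
    exact Finset.sum_congr rfl fun s _ => by simp [Finset.sum_const, card_range, mul_comm]
  have h2 : ∑ s ∈ range ℓ, dig p m s * (kk p ℓ u s * (i - s))
      = ∑ s ∈ range i, dig p m s * (kk p ℓ u s * (i - s)) := by
    symm
    apply Finset.sum_subset (Finset.range_subset_range.mpr hi.le)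
    intro s hs hns
    rw [mem_range] at hs hns
    have : i - s = 0 := by omega
    simp [this]
  have h3 : ∀ s ∈ range i, dig p m s * (kk p ℓ u s * (i - s))
      ≤ (p - 1) * ℓ * (u * (2 * p * ℓ + 1) ^ s) := by
    intro s hs
    rw [mem_range] at hs
    have hd : dig p m s ≤ p - 1 := by have := dig_lt p m s hp; omega
    have his : i - s ≤ ℓ := by omega
    calc dig p m s * (kk p ℓ u s * (i - s)) ≤ (p - 1) * (kk p ℓ u s * ℓ) :=
        Nat.mul_le_mul hd (Nat.mul_le_mul_left _ his)
      _ = (p - 1) * ℓ * (u * (2 * p * ℓ + 1) ^ s) := by rw [kk]; ring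
  rw [h1, h2, kk]
  exact le_trans (Nat.add_le_add_right (Finset.sum_le_sum h3) u) (geo0 p ℓ u hp i)

lemma sg_le_sg_zero (p ℓ u m i : ℕ) : sg p ℓ u m i ≤ sg p ℓ u m 0 := by
  apply Finset.sum_le_sum
  intro y _
  apply Nat.mul_le_mul_left
  have h1 : max (0:ℕ) y.1 = y.1 := Nat.max_eq_right (Nat.zero_le _)
  rw [h1]
  exact Nat.sub_le_sub_left (le_max_right i y.1) _

lemma keyA (p ℓ u m : ℕ) (hp : 0 < p) {i : ℕ} (hi : i < ℓ) :
    u + sg p ℓ u m 0 ≤ kk p ℓ u i + sg p ℓ u m i := by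
  have hdec : sg p ℓ u m 0 = sg p ℓ u m i + ∑ y ∈ II p ℓ m, kk p ℓ u y.1 * (i - y.1) := by
    rw [sg, sg, ← Finset.sum_add_distrib]
    apply Finset.sum_congr rfl
    intro y hy
    have hy1 : y.1 < ℓ := (mem_II.mp hy).1
    rw [← Nat.mul_add]
    congr 1
    rcases le_total i y.1 with h | h
    · rw [Nat.max_eq_right (Nat.zero_le _), max_eq_right h]
      omega
    · rw [Nat.max_eq_right (Nat.zero_le _), max_eq_left h]
      omega
  have := geo p ℓ u m hp hi
  omega

lemma padicValInt_ppow (p : ℕ) (hp : p.Prime) (n : ℕ) : padicValInt p ((p : ℤ) ^ n) = n := by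
  haveI := Fact.mk hp
  rw [padicValInt, Int.natAbs_pow, Int.natAbs_natCast, padicValNat.prime_pow]

lemma padicValInt_zpow (p : ℕ) (hp : p.Prime) {z : ℤ} (hz : z ≠ 0) (n : ℕ) :
    padicValInt p (z ^ n) = n * padicValInt p z := by
  haveI := Fact.mk hp
  rw [padicValInt, Int.natAbs_pow, padicValNat.pow _ _, padicValInt]

lemma padicValInt_prod (p : ℕ) (hp : p.Prime) {α : Type*} (s : Finset α) (f : α → ℤ)
    (h : ∀ x ∈ s, f x ≠ 0) :
    padicValInt p (∏ x ∈ s, f x) = ∑ x ∈ s, padicValInt p (f x) := by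
  haveI := Fact.mk hp
  classical
  induction s using Finset.cons_induction with
  | empty => simp
  | cons a s ha ih =>
    rw [Finset.prod_cons, Finset.sum_cons,
      padicValInt.mul (h a (Finset.mem_cons_self a s))
        (Finset.prod_ne_zero_iff.mpr fun x hx => h x (Finset.mem_cons.mpr (Or.inr hx))),
      ih fun x hx => h x (Finset.mem_cons.mpr (Or.inr hx))]

lemma onclass (p ℓ u m : ℕ) (hp : p.Prime) {x : (_ : ℕ) × ℕ}
    (hx : x ∈ II p ℓ m) (t : ℤ) (ht : (p : ℤ) ^ (ℓ - x.1) ∣ t - aa p ℓ m x.1 x.2) :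
    (p : ℤ) ^ (kk p ℓ u x.1 + sg p ℓ u m x.1)
      ∣ ∏ y ∈ II p ℓ m, (t - aa p ℓ m y.1 y.2) ^ (kk p ℓ u y.1) := by
  classical
  have hx1 : x.1 < ℓ := (mem_II.mp hx).1
  rw [← Finset.mul_prod_erase _ _ hx]
  have hsg : sg p ℓ u m x.1 = kk p ℓ u x.1 * (ℓ - 1 - x.1)
      + ∑ y ∈ (II p ℓ m).erase x, kk p ℓ u y.1 * (ℓ - 1 - max x.1 y.1) := by
    rw [sg, ← Finset.add_sum_erase _ _ hx, max_self]
  have hexp : kk p ℓ u x.1 + sg p ℓ u m x.1 = kk p ℓ u x.1 * (ℓ - x.1)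
      + ∑ y ∈ (II p ℓ m).erase x, kk p ℓ u y.1 * (ℓ - 1 - max x.1 y.1) := by
    rw [hsg, show ℓ - x.1 = 1 + (ℓ - 1 - x.1) by omega, Nat.mul_add, Nat.mul_one]
    ring
  rw [hexp, pow_add]
  apply mul_dvd_mul
  · rw [mul_comm, pow_mul]
    exact pow_dvd_pow_of_dvd ht _
  · rw [← Finset.prod_pow_eq_pow_sum]
    apply Finset.prod_dvd_prod_of_dvd
    intro y hy
    have hyI : y ∈ II p ℓ m := Finset.mem_of_mem_erase hy
    have hxy : x ≠ y := (Finset.ne_of_mem_erase hy).symm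
    obtain ⟨e, he, _⟩ := pairdiff p ℓ m hp hx hyI hxy
    have hdvd : (p : ℤ) ^ (ℓ - 1 - max x.1 y.1) ∣ t - aa p ℓ m y.1 y.2 := by
      have hsplit : t - aa p ℓ m y.1 y.2 = (t - aa p ℓ m x.1 x.2)
          + (aa p ℓ m x.1 x.2 - aa p ℓ m y.1 y.2) := by ring
      rw [hsplit, he]
      refine dvd_add (dvd_trans (pow_dvd_pow _ ?_) ht) (Dvd.intro e rfl)
      have := le_max_left x.1 y.1
      omega
    rw [mul_comm, pow_mul]
    exact pow_dvd_pow_of_dvd hdvd _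

lemma offclass (p ℓ u m : ℕ) (hp : p.Prime) (hne : (II p ℓ m).Nonempty) (t : ℤ)
    (h : ∀ x ∈ II p ℓ m, ¬ (p : ℤ) ^ (ℓ - x.1) ∣ t - aa p ℓ m x.1 x.2) :
    (∀ y ∈ II p ℓ m, t - aa p ℓ m y.1 y.2 ≠ 0) ∧
    ∃ i₀, i₀ < ℓ ∧
      padicValInt p (∏ y ∈ II p ℓ m, (t - aa p ℓ m y.1 y.2) ^ (kk p ℓ u y.1))
        ≤ sg p ℓ u m i₀ := by
  haveI := Fact.mk hp
  have hnz : ∀ y ∈ II p ℓ m, t - aa p ℓ m y.1 y.2 ≠ 0 := by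
    intro y hy hzero
    exact h y hy (by rw [hzero]; exact dvd_zero _)
  obtain ⟨x₀, hx₀, hmax⟩ := Finset.exists_max_image (II p ℓ m)
    (fun y => padicValInt p (t - aa p ℓ m y.1 y.2)) hne
  have hbound : ∀ y ∈ II p ℓ m,
      padicValInt p (t - aa p ℓ m y.1 y.2) ≤ ℓ - 1 - max x₀.1 y.1 := by
    intro y hy
    by_contra hc
    push_neg at hc
    have hyv : (p : ℤ) ^ (ℓ - 1 - max x₀.1 y.1 + 1) ∣ t - aa p ℓ m y.1 y.2 :=
      (padicValInt_dvd_iff _ _).mpr (Or.inr (by omega))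
    by_cases hxy : y = x₀
    · subst hxy
      rw [max_self] at hyv
      have hy1 : y.1 < ℓ := (mem_II.mp hy).1
      exact h y hy (by rw [show ℓ - y.1 = ℓ - 1 - y.1 + 1 by omega]; exact hyv)
    · have hvx : ℓ - 1 - max x₀.1 y.1 + 1 ≤ padicValInt p (t - aa p ℓ m x₀.1 x₀.2) :=
        le_trans (by omega) (hmax y hy)
      have hx₀v : (p : ℤ) ^ (ℓ - 1 - max x₀.1 y.1 + 1) ∣ t - aa p ℓ m x₀.1 x₀.2 :=
        (padicValInt_dvd_iff _ _).mpr (Or.inr hvx)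
      obtain ⟨e, he, hnd⟩ := pairdiff p ℓ m hp hx₀ hy (fun hc' => hxy (hc' ▸ rfl))
      have hdd : (p : ℤ) ^ (ℓ - 1 - max x₀.1 y.1 + 1) ∣ aa p ℓ m x₀.1 x₀.2 - aa p ℓ m y.1 y.2 := by
        have hsplit : aa p ℓ m x₀.1 x₀.2 - aa p ℓ m y.1 y.2
            = (t - aa p ℓ m y.1 y.2) - (t - aa p ℓ m x₀.1 x₀.2) := by ring
        rw [hsplit]
        exact dvd_sub hyv hx₀v
      rw [he, pow_succ] at hdd
      exact hnd ((mul_dvd_mul_iff_left (a := (p : ℤ) ^ (ℓ - 1 - max x₀.1 y.1))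
        (pow_ne_zero _ (by exact_mod_cast hp.ne_zero))).mp hdd)
  refine ⟨hnz, x₀.1, (mem_II.mp hx₀).1, ?_⟩
  rw [padicValInt_prod p hp _ _ (fun y hy => pow_ne_zero _ (hnz y hy)), sg]
  apply Finset.sum_le_sum
  intro y hy
  rw [padicValInt_zpow p hp (hnz y hy)]
  exact Nat.mul_le_mul_left _ (hbound y hy)

end PZD

theorem exists_poly_with_prescribed_zero_density (p : ℕ) (hp : p.Prime)
    (ℓ u : ℕ) (hℓ : 1 ≤ ℓ) (hu : 1 ≤ u) (m : ℕ) (hm : m ≤ p ^ ℓ) :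
    ∀ r₀ : ℕ, ∃ r : ℕ, r₀ ≤ r ∧ ∃ P : Polynomial ℤ,
      ((Finset.range (p ^ (r + ℓ))).filter
        fun t : ℕ => (p : ℤ) ^ (r + ℓ) ∣ P.eval (t : ℤ)).card = m * p ^ r ∧
      ∀ t : ℤ, ¬ (p : ℤ) ^ (r + ℓ) ∣ P.eval t →
        P.eval t ≠ 0 ∧ (padicValInt p (P.eval t) : ℤ) ≤ (r : ℤ) + ℓ - u := by
  classical
  intro r₀
  open PZD in
  haveI := Fact.mk hp
  have hpne : ((p : ℤ)) ≠ 0 := by exact_mod_cast hp.ne_zero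
  rcases Nat.eq_zero_or_pos m with hm0 | hmpos
  · -- m = 0
    subst hm0
    refine ⟨max r₀ u, le_max_left _ _, Polynomial.C ((p : ℤ) ^ (max r₀ u + ℓ - u)), ?_, ?_⟩
    · rw [Finset.filter_false_of_mem, Finset.card_empty, Nat.zero_mul]
      intro t _ hdvd
      simp only [Polynomial.eval_C] at hdvd
      rcases (padicValInt_dvd_iff _ _).mp hdvd with h0 | hle
      · exact pow_ne_zero _ hpne h0
      · rw [PZD.padicValInt_ppow p hp] at hle
        have : u ≤ max r₀ u := le_max_right _ _
        omega
    · intro t _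
      simp only [Polynomial.eval_C]
      refine ⟨pow_ne_zero _ hpne, ?_⟩
      rw [PZD.padicValInt_ppow p hp]
      have : u ≤ max r₀ u := le_max_right _ _
      omega
  rcases eq_or_lt_of_le hm with hmeq | hmlt
  · -- m = p ^ ℓ
    refine ⟨r₀, le_rfl, Polynomial.C ((p : ℤ) ^ (r₀ + ℓ)), ?_, ?_⟩
    · rw [Finset.filter_true_of_mem, Finset.card_range, hmeq, ← pow_add, add_comm]
      intro t _
      simp [Polynomial.eval_C]
    · intro t hdvd
      exact absurd (by simp [Polynomial.eval_C]) hdvd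
  -- main case 0 < m < p ^ ℓ
  set r := max r₀ (u + sg p ℓ u m 0) with hrdef
  have hr₁ : u + sg p ℓ u m 0 ≤ r + ℓ := le_trans (le_max_right _ _) (Nat.le_add_right _ _)
  set cc := r + ℓ - (u + sg p ℓ u m 0) with hccdef
  set P : Polynomial ℤ := Polynomial.C ((p : ℤ) ^ cc) *
    ∏ y ∈ II p ℓ m, (Polynomial.X - Polynomial.C (aa p ℓ m y.1 y.2)) ^ (kk p ℓ u y.1) with hPdef
  have heval : ∀ t : ℤ, P.eval t
      = (p : ℤ) ^ cc * ∏ y ∈ II p ℓ m, (t - aa p ℓ m y.1 y.2) ^ (kk p ℓ u y.1) := by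
    intro t
    simp [hPdef, Polynomial.eval_prod]
  have hIne : (II p ℓ m).Nonempty := II_nonempty p ℓ m hp.pos hmpos hmlt
  have hdiv : ∀ t : ℤ, ∀ x ∈ II p ℓ m,
      (p : ℤ) ^ (ℓ - x.1) ∣ t - aa p ℓ m x.1 x.2 → (p : ℤ) ^ (r + ℓ) ∣ P.eval t := by
    intro t x hx hcl
    rw [heval]
    have h1 := onclass p ℓ u m hp hx t hcl
    have h2 : r + ℓ ≤ cc + (kk p ℓ u x.1 + sg p ℓ u m x.1) := by
      have := keyA p ℓ u m hp.pos (mem_II.mp hx).1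
      omega
    exact dvd_trans (pow_dvd_pow _ h2)
      (by rw [pow_add]; exact mul_dvd_mul_left _ h1)
  have hoff : ∀ t : ℤ, (∀ x ∈ II p ℓ m, ¬ (p : ℤ) ^ (ℓ - x.1) ∣ t - aa p ℓ m x.1 x.2) →
      P.eval t ≠ 0 ∧ padicValInt p (P.eval t) + u ≤ r + ℓ := by
    intro t ht
    obtain ⟨hnz, i₀, hi₀, hv⟩ := offclass p ℓ u m hp hIne t ht
    have hprodne : (∏ y ∈ II p ℓ m, (t - aa p ℓ m y.1 y.2) ^ (kk p ℓ u y.1)) ≠ 0 :=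
      Finset.prod_ne_zero_iff.mpr fun y hy => pow_ne_zero _ (hnz y hy)
    have hPne : P.eval t ≠ 0 := by
      rw [heval]
      exact mul_ne_zero (pow_ne_zero _ hpne) hprodne
    refine ⟨hPne, ?_⟩
    have hvP : padicValInt p (P.eval t)
        = cc + padicValInt p (∏ y ∈ II p ℓ m, (t - aa p ℓ m y.1 y.2) ^ (kk p ℓ u y.1)) := by
      rw [heval, padicValInt.mul (pow_ne_zero _ hpne) hprodne, PZD.padicValInt_ppow p hp]
    have hs := sg_le_sg_zero p ℓ u m i₀
    omega
  refine ⟨r, le_max_left _ _, P, ?_, ?_⟩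
  · -- counting
    have hfe : (Finset.range (p ^ (r + ℓ))).filter
          (fun t : ℕ => (p : ℤ) ^ (r + ℓ) ∣ P.eval (t : ℤ))
        = (II p ℓ m).biUnion (fun x => (Finset.range (p ^ (r + ℓ))).filter
            (fun t : ℕ => (p : ℤ) ^ (ℓ - x.1) ∣ (t : ℤ) - aa p ℓ m x.1 x.2)) := by
      ext t
      simp only [Finset.mem_filter, Finset.mem_biUnion, Finset.mem_range]
      constructor
      · rintro ⟨hlt, hdvd⟩
        by_contra hc
        push_neg at hc
        have hc' : ∀ x ∈ II p ℓ m, ¬ (p : ℤ) ^ (ℓ - x.1) ∣ (t : ℤ) - aa p ℓ m x.1 x.2 := by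
          intro x hx hd
          exact hc x hx hlt hd
        obtain ⟨hne, hvle⟩ := hoff (t : ℤ) hc'
        rcases (padicValInt_dvd_iff _ _).mp hdvd with h0 | hle
        · exact hne h0
        · omega
      · rintro ⟨x, hx, hlt, hdvd⟩
        exact ⟨hlt, hdiv (t : ℤ) x hx hdvd⟩
    have hdisj : ∀ x ∈ II p ℓ m, ∀ y ∈ II p ℓ m, x ≠ y →
        Disjoint ((Finset.range (p ^ (r + ℓ))).filter
            (fun t : ℕ => (p : ℤ) ^ (ℓ - x.1) ∣ (t : ℤ) - aa p ℓ m x.1 x.2))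
          ((Finset.range (p ^ (r + ℓ))).filter
            (fun t : ℕ => (p : ℤ) ^ (ℓ - y.1) ∣ (t : ℤ) - aa p ℓ m y.1 y.2)) := by
      intro x hx y hy hxy
      rw [Finset.disjoint_left]
      intro t htx hty
      rw [Finset.mem_filter] at htx hty
      obtain ⟨e, he, hnd⟩ := pairdiff p ℓ m hp hx hy hxy
      have hx1 : x.1 < ℓ := (mem_II.mp hx).1
      have hy1 : y.1 < ℓ := (mem_II.mp hy).1
      have h1 : (p : ℤ) ^ (ℓ - max x.1 y.1) ∣ (t : ℤ) - aa p ℓ m x.1 x.2 :=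
        dvd_trans (pow_dvd_pow _ (by have := le_max_left x.1 y.1; omega)) htx.2
      have h2 : (p : ℤ) ^ (ℓ - max x.1 y.1) ∣ (t : ℤ) - aa p ℓ m y.1 y.2 :=
        dvd_trans (pow_dvd_pow _ (by have := le_max_right x.1 y.1; omega)) hty.2
      have h3 : (p : ℤ) ^ (ℓ - max x.1 y.1) ∣ aa p ℓ m x.1 x.2 - aa p ℓ m y.1 y.2 := by
        have hsplit : aa p ℓ m x.1 x.2 - aa p ℓ m y.1 y.2
            = ((t : ℤ) - aa p ℓ m y.1 y.2) - ((t : ℤ) - aa p ℓ m x.1 x.2) := by ring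
        rw [hsplit]
        exact dvd_sub h2 h1
      rw [he, show ℓ - max x.1 y.1 = (ℓ - 1 - max x.1 y.1) + 1 by
        have := le_max_left x.1 y.1; omega, pow_succ] at h3
      exact hnd ((mul_dvd_mul_iff_left (a := (p : ℤ) ^ (ℓ - 1 - max x.1 y.1))
        (pow_ne_zero _ hpne)).mp h3)
    rw [hfe, Finset.card_biUnion hdisj]
    have hcards : ∀ x ∈ II p ℓ m, ((Finset.range (p ^ (r + ℓ))).filter
        (fun t : ℕ => (p : ℤ) ^ (ℓ - x.1) ∣ (t : ℤ) - aa p ℓ m x.1 x.2)).card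
        = p ^ (r + x.1) := by
      intro x hx
      have hx1 : x.1 < ℓ := (mem_II.mp hx).1
      rw [count_class p hp.pos _ _ (by omega) _, show r + ℓ - (ℓ - x.1) = r + x.1 by omega]
    rw [Finset.sum_congr rfl hcards, II, Finset.sum_sigma]
    have h5 : ∀ i ∈ range ℓ, (∑ _j ∈ range (dig p m i), p ^ (r + (⟨i, _j⟩ : (_ : ℕ) × ℕ).1))
        = dig p m i * p ^ i * p ^ r := by
      intro i _
      simp [Finset.sum_const, card_range, pow_add]
      ring
    rw [Finset.sum_congr rfl h5, ← Finset.sum_mul]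
    have h6 : ∑ i ∈ range ℓ, dig p m i * p ^ i = m := by
      have := digit_sum p m ℓ
      rw [Nat.mod_eq_of_lt hmlt] at this
      simpa [dig] using this
    rw [h6]
  · intro t hndvd
    by_cases hcl : ∃ x ∈ II p ℓ m, (p : ℤ) ^ (ℓ - x.1) ∣ t - aa p ℓ m x.1 x.2
    · obtain ⟨x, hx, hclx⟩ := hcl
      exact absurd (hdiv t x hx hclx) hndvd
    · push_neg at hcl
      obtain ⟨hne, hv⟩ := hoff t hcl
      exact ⟨hne, by omega⟩
end

section
/- Let h, k be coprime integers with k > 0 and 0 < |h/k| < 1, and let p₁,…,p_g be the distinct prime factors of k. Then there exist integers d₁,…,d_g and positive integers r₁,…,r_g such that |d_i| < p_i^{r_i} for each i and h/k = ∏_{i=1}^{g} d_i / p_i^{r_i}. -/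
lemma log_pow_ne (p q : ℕ) (hp : p.Prime) (hq : q.Prime) (hne : p ≠ q) (x y : ℕ)
    (hx : 0 < x) : (x : ℝ) * Real.log p ≠ (y : ℝ) * Real.log q := by
  intro hEq
  have hp0 : (0:ℝ) < p := by exact_mod_cast hp.pos
  have hq0 : (0:ℝ) < q := by exact_mod_cast hq.pos
  rw [← Real.log_pow, ← Real.log_pow] at hEq
  have h1 : ((p ^ x : ℕ) : ℝ) = ((q ^ y : ℕ) : ℝ) := by
    push_cast
    exact Real.log_injOn_pos (Set.mem_Ioi.2 (by positivity)) (Set.mem_Ioi.2 (by positivity)) hEq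
  have h2 : p ^ x = q ^ y := Nat.cast_injective h1
  rcases Nat.eq_zero_or_pos y with hy | hy
  · rw [hy, pow_zero] at h2
    have := Nat.one_lt_pow hx.ne' hp.one_lt
    omega
  · have hpd : p ∣ q ^ y := h2 ▸ dvd_pow_self p hx.ne'
    exact hne ((Nat.prime_dvd_prime_iff_eq hp hq).1 (hp.dvd_of_dvd_pow hpd))

lemma exists_small (p q : ℕ) (hp : p.Prime) (hq : q.Prime) (hne : p ≠ q) (δ : ℝ)
    (hδ : 0 < δ) : ∃ a b : ℕ, 0 < a * Real.log p - b * Real.log q ∧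
      a * Real.log p - b * Real.log q < δ := by
  have hlp : 0 < Real.log p := Real.log_pos (by exact_mod_cast hp.one_lt)
  have hlq : 0 < Real.log q := Real.log_pos (by exact_mod_cast hq.one_lt)
  have hl2p : Real.log 2 ≤ Real.log p := Real.log_le_log (by norm_num) (by exact_mod_cast hp.two_le)
  have hl2q : Real.log 2 ≤ Real.log q := Real.log_le_log (by norm_num) (by exact_mod_cast hq.two_le)
  have hl2 : 0 < Real.log 2 := Real.log_pos (by norm_num)
  set S : AddSubgroup ℝ := AddSubgroup.closure {Real.log p, Real.log q} with hS
  have hdense : Dense (S : Set ℝ) := by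
    rcases S.dense_or_cyclic with hd | ⟨c, hc⟩
    · exact hd
    · exfalso
      have hpS : Real.log p ∈ S := AddSubgroup.subset_closure (by simp)
      have hqS : Real.log q ∈ S := AddSubgroup.subset_closure (by simp)
      rw [hc, AddSubgroup.mem_closure_singleton] at hpS hqS
      obtain ⟨m, hm⟩ := hpS
      obtain ⟨n, hn⟩ := hqS
      have hm0 : m ≠ 0 := by rintro rfl; simp at hm; linarith
      have hn0 : n ≠ 0 := by rintro rfl; simp at hn; linarith
      have key : (n : ℝ) * Real.log p = (m : ℝ) * Real.log q := by
        rw [← hm, ← hn]; push_cast [zsmul_eq_mul]; ring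
      rcases lt_trichotomy n 0 with hn1 | hn1 | hn1
      · have hm1 : m < 0 := by
          by_contra hm1
          have h1 : (n:ℝ) * Real.log p < 0 :=
            mul_neg_of_neg_of_pos (by exact_mod_cast hn1) hlp
          have h2 : (0:ℝ) ≤ (m:ℝ) * Real.log q :=
            mul_nonneg (by exact_mod_cast not_lt.mp hm1) hlq.le
          linarith
        have : ((-n).toNat : ℝ) * Real.log p = ((-m).toNat : ℝ) * Real.log q := by
          have e1 : ((-n).toNat : ℝ) = -(n:ℝ) := by
            exact_mod_cast Int.toNat_of_nonneg (show (0:ℤ) ≤ -n by omega)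
          have e2 : ((-m).toNat : ℝ) = -(m:ℝ) := by
            exact_mod_cast Int.toNat_of_nonneg (show (0:ℤ) ≤ -m by omega)
          rw [e1, e2]; linarith
        exact log_pow_ne p q hp hq hne _ _ (by omega) this
      · exact hn0 hn1
      · have hm1 : 0 < m := by
          by_contra hm1
          have h1 : (0:ℝ) < (n:ℝ) * Real.log p :=
            mul_pos (by exact_mod_cast hn1) hlp
          have h2 : ((m:ℝ)) * Real.log q ≤ 0 :=
            mul_nonpos_of_nonpos_of_nonneg (by exact_mod_cast not_lt.mp hm1) hlq.le
          linarith
        have : (n.toNat : ℝ) * Real.log p = (m.toNat : ℝ) * Real.log q := by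
          have e1 : (n.toNat : ℝ) = (n:ℝ) := by
            exact_mod_cast Int.toNat_of_nonneg (show (0:ℤ) ≤ n by omega)
          have e2 : (m.toNat : ℝ) = (m:ℝ) := by
            exact_mod_cast Int.toNat_of_nonneg (show (0:ℤ) ≤ m by omega)
          rw [e1, e2]; linarith
        exact log_pow_ne p q hp hq hne _ _ (by omega) this
  set δ' := min δ (Real.log 2) with hδ'
  have hδ'0 : 0 < δ' := lt_min hδ hl2
  obtain ⟨s, hsS, hs0, hsδ⟩ : ∃ s ∈ (S : Set ℝ), 0 < s ∧ s < δ' := by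
    obtain ⟨s, hsS, hs⟩ := hdense.exists_between hδ'0
    exact ⟨s, hsS, hs.1, hs.2⟩
  obtain ⟨m, n, hmn⟩ := AddSubgroup.mem_closure_pair.1 hsS
  rw [zsmul_eq_mul, zsmul_eq_mul] at hmn
  have hsδδ : s < δ := lt_of_lt_of_le hsδ (min_le_left _ _)
  have hs2 : s < Real.log 2 := lt_of_lt_of_le hsδ (min_le_right _ _)
  -- sign analysis
  rcases le_or_gt m 0 with hm | hm
  · rcases le_or_gt n 0 with hn | hn
    · exfalso
      have h1 : (m:ℝ) * Real.log p ≤ 0 :=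
        mul_nonpos_of_nonpos_of_nonneg (by exact_mod_cast hm) hlp.le
      have h2 : (n:ℝ) * Real.log q ≤ 0 :=
        mul_nonpos_of_nonpos_of_nonneg (by exact_mod_cast hn) hlq.le
      linarith
    · -- type B : s = n log q - (-m) log p ; convert via floor trick
      obtain ⟨K, hK, -⟩ := existsUnique_add_zsmul_mem_Ioc hs0 0 (Real.log p - s)
      rw [zero_add, zsmul_eq_mul] at hK
      have hKIoc : Real.log p - s < (K:ℝ) * s ∧ (K:ℝ) * s ≤ Real.log p := by
        constructor
        · exact hK.1
        · have := hK.2; linarith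
      have hKpos : 0 < K := by
        by_contra hK0
        have : (K:ℝ) * s ≤ 0 := mul_nonpos_of_nonpos_of_nonneg (by exact_mod_cast not_lt.mp hK0) hs0.le
        linarith
      set a : ℕ := (1 - K * m).toNat with ha
      set b : ℕ := (K * n).toNat with hb
      have hea : (a : ℝ) = 1 - (K:ℝ) * m := by
        exact_mod_cast Int.toNat_of_nonneg (show (0:ℤ) ≤ 1 - K * m by nlinarith)
      have heb : (b : ℝ) = (K:ℝ) * n := by
        exact_mod_cast Int.toNat_of_nonneg (show (0:ℤ) ≤ K * n by positivity)
      have hval : (a:ℝ) * Real.log p - (b:ℝ) * Real.log q = Real.log p - (K:ℝ) * s := by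
        rw [hea, heb, ← hmn]; ring
      have hapos : 0 < a := by
        have : (0:ℤ) < 1 - K * m := by nlinarith
        omega
      have hne0 : (a:ℝ) * Real.log p - (b:ℝ) * Real.log q ≠ 0 := by
        intro hc0
        exact log_pow_ne p q hp hq hne a b hapos (by linarith)
      refine ⟨a, b, ?_, ?_⟩
      · rcases lt_or_eq_of_le (hval ▸ sub_nonneg.2 hKIoc.2 : 0 ≤ (a:ℝ) * Real.log p - (b:ℝ) * Real.log q) with h | h
        · exact h
        · exact absurd h.symm hne0
      · rw [hval]; linarith [hKIoc.1]
  · rcases le_or_gt n 0 with hn | hn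
    · -- type A directly
      refine ⟨m.toNat, (-n).toNat, ?_, ?_⟩ <;>
      · have e1 : (m.toNat : ℝ) = (m:ℝ) := by
          exact_mod_cast Int.toNat_of_nonneg (show (0:ℤ) ≤ m by omega)
        have e2 : ((-n).toNat : ℝ) = -(n:ℝ) := by
          exact_mod_cast Int.toNat_of_nonneg (show (0:ℤ) ≤ -n by omega)
        rw [e1, e2]
        rw [(show (m:ℝ) * Real.log p - (-(n:ℝ)) * Real.log q = m * Real.log p + n * Real.log q by ring), hmn]
        first
        | exact hs0
        | exact hsδδ
    · exfalso
      have h1 : Real.log p ≤ (m:ℝ) * Real.log p := by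
        nlinarith [(show (1:ℝ) ≤ (m:ℝ) by exact_mod_cast hm)]
      have h2 : Real.log q ≤ (n:ℝ) * Real.log q := by
        nlinarith [(show (1:ℝ) ≤ (n:ℝ) by exact_mod_cast hn)]
      linarith

lemma window_lemma (q p : ℕ) (hq : q.Prime) (hp : p.Prime) (hne : q ≠ p) (a : ℕ) (ρ : ℝ)
    (hρ : 1 < ρ) : ∃ r x : ℕ, a ≤ r ∧ (p:ℝ)^x < (q:ℝ)^r ∧ (q:ℝ)^r < ρ * (p:ℝ)^x := by
  have hp0 : (0:ℝ) < p := by exact_mod_cast hp.pos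
  have hq0 : (0:ℝ) < q := by exact_mod_cast hq.pos
  have hρ0 : (0:ℝ) < ρ := lt_trans one_pos hρ
  have hA : 0 < Real.log ρ := Real.log_pos hρ
  have hδ0 : 0 < Real.log ρ / (2 * ((a:ℝ) + 1)) := by positivity
  obtain ⟨c, b, hs0, hsδ⟩ := exists_small q p hq hp hne _ hδ0
  set s := (c:ℝ) * Real.log q - (b:ℝ) * Real.log p with hsdef
  have hc : 0 < c := by
    by_contra hc
    have hc0 : c = 0 := by omega
    subst hc0
    have : s ≤ 0 := by
      simp only [hsdef, Nat.cast_zero, zero_mul, zero_sub, neg_nonpos]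
      positivity
    linarith
  clear_value s
  obtain ⟨N, hN1, hN2, hNa⟩ : ∃ N : ℕ, Real.log ρ / 2 < (N:ℝ) * s ∧
      (N:ℝ) * s < Real.log ρ ∧ a < N := by
    refine ⟨⌊(Real.log ρ / 2) / s⌋₊ + 1, ?_, ?_, ?_⟩
    · have h1 : (Real.log ρ / 2) / s < ((⌊(Real.log ρ / 2) / s⌋₊ + 1 : ℕ):ℝ) := by
        push_cast
        exact Nat.lt_floor_add_one _
      exact (div_lt_iff₀ hs0).1 h1
    · have h1 : (⌊(Real.log ρ / 2) / s⌋₊:ℝ) ≤ (Real.log ρ / 2) / s := Nat.floor_le (by positivity)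
      have h2 : (⌊(Real.log ρ / 2) / s⌋₊:ℝ) * s ≤ Real.log ρ / 2 := (le_div_iff₀ hs0).1 h1
      have h4 : s < Real.log ρ / 2 := by
        refine lt_of_lt_of_le hsδ ?_
        apply div_le_div_of_nonneg_left hA.le (by norm_num)
        nlinarith [Nat.cast_nonneg (α := ℝ) a]
      push_cast
      nlinarith
    · have hNpos : (0:ℝ) < ((⌊(Real.log ρ / 2) / s⌋₊ + 1 : ℕ):ℝ) := by positivity
      have h5 : Real.log ρ / 2 < ((⌊(Real.log ρ / 2) / s⌋₊ + 1 : ℕ):ℝ) * (Real.log ρ / (2 * ((a:ℝ) + 1))) := by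
        refine lt_trans ?_ ((mul_lt_mul_iff_right₀ hNpos).2 hsδ)
        have h1 : (Real.log ρ / 2) / s < ((⌊(Real.log ρ / 2) / s⌋₊ + 1 : ℕ):ℝ) := by
          push_cast
          exact Nat.lt_floor_add_one _
        exact (div_lt_iff₀ hs0).1 h1
      have h6 : ((a:ℝ) + 1) * (Real.log ρ / (2 * ((a:ℝ) + 1))) = Real.log ρ / 2 := by
        field_simp
      have h7 : ((a:ℝ) + 1) < ((⌊(Real.log ρ / 2) / s⌋₊ + 1 : ℕ):ℝ) :=
        (mul_lt_mul_iff_left₀ hδ0).1 (h6 ▸ h5)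
      have h8 : a + 1 < ⌊(Real.log ρ / 2) / s⌋₊ + 1 + 1 := by exact_mod_cast lt_trans h7 (by push_cast; linarith [Nat.lt_floor_add_one ((Real.log ρ / 2) / s)] : ((⌊(Real.log ρ / 2) / s⌋₊ + 1 : ℕ):ℝ) < (⌊(Real.log ρ / 2) / s⌋₊ + 1 + 1 : ℕ))
      omega
  have hexp : (N:ℝ) * s = ((N*c:ℕ):ℝ) * Real.log q - ((N*b:ℕ):ℝ) * Real.log p := by
    rw [hsdef]; push_cast; ring
  refine ⟨N * c, N * b, ?_, ?_, ?_⟩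
  · calc a ≤ N := le_of_lt hNa
    _ ≤ N * c := Nat.le_mul_of_pos_right N hc
  · have hlog : Real.log ((p:ℝ) ^ (N * b)) < Real.log ((q:ℝ) ^ (N * c)) := by
      rw [Real.log_pow, Real.log_pow]
      linarith
    exact (Real.log_lt_log_iff (by positivity) (by positivity)).1 hlog
  · have hlog : Real.log ((q:ℝ) ^ (N * c)) < Real.log (ρ * (p:ℝ) ^ (N * b)) := by
      rw [Real.log_pow, Real.log_mul (ne_of_gt hρ0) (by positivity), Real.log_pow]
      linarith
    exact (Real.log_lt_log_iff (by positivity) (by positivity)).1 hlog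

lemma aux_main (g : ℕ) : ∀ k : ℕ, k ≠ 0 → k.primeFactors.card = g → ∀ h : ℤ, h ≠ 0 →
    |h| < (k:ℤ) →
    ∃ (d : ℕ → ℤ) (r : ℕ → ℕ),
      (∀ q ∈ k.primeFactors, 0 < r q ∧ |d q| < (q : ℤ) ^ (r q)) ∧
      (h : ℚ) / (k : ℚ) = ∏ q ∈ k.primeFactors, (d q : ℚ) / (q : ℚ) ^ (r q) := by
  induction g with
  | zero =>
      intro k hk0 hcard h hh0 habs
      exfalso
      have hk1 : k = 1 := by
        have := (Nat.primeFactors_eq_empty).1 (Finset.card_eq_zero.1 hcard)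
        omega
      subst hk1
      have : |h| < 1 := by exact_mod_cast habs
      exact hh0 (Int.abs_lt_one_iff.1 this)
  | succ g ih =>
      intro k hk0 hcard h hh0 habs
      have hne : k.primeFactors.Nonempty := Finset.card_pos.1 (by omega)
      obtain ⟨q, hqmem⟩ := hne
      have hqp : q.Prime := Nat.prime_of_mem_primeFactors hqmem
      set a := k.factorization q with hadef
      have ha : 0 < a :=
        hqp.factorization_pos_of_dvd hk0 (Nat.dvd_of_mem_primeFactors hqmem)
      set k' := ordCompl[q] k with hk'def
      have hk'0 : k' ≠ 0 := (Nat.ordCompl_pos q hk0).ne'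
      have hkk : q ^ a * k' = k := Nat.ordProj_mul_ordCompl_eq_self k q
      have hpf : k'.primeFactors = k.primeFactors.erase q := by
        rw [← Nat.support_factorization, Nat.factorization_ordCompl,
          Finsupp.support_erase, Nat.support_factorization]
      have hcard' : k'.primeFactors.card = g := by
        rw [hpf, Finset.card_erase_of_mem hqmem, hcard]
        omega
      clear hadef hk'def
      clear_value a k'
      by_cases hg : k' = 1
      · -- k = q ^ a
        have hsingle : k.primeFactors = {q} := by
          have h1 : k.primeFactors.erase q = ∅ := by
            rw [← hpf, hg]; simp
          have := (Finset.erase_eq_empty_iff _ _).1 h1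
          rcases this with h2 | h2
          · exact absurd (h2 ▸ hqmem) (Finset.notMem_empty q)
          · exact h2
        have hkqa : k = q ^ a := by rw [← hkk, hg, mul_one]
        refine ⟨fun _ => h, fun _ => a, ?_, ?_⟩
        · intro q' hq'
          rw [hsingle, Finset.mem_singleton] at hq'
          subst hq'
          refine ⟨ha, ?_⟩
          show |h| < (q':ℤ) ^ a
          have h2 : |h| < ((q' ^ a : ℕ) : ℤ) := by rw [← hkqa]; exact habs
          exact_mod_cast h2
        · rw [hsingle, Finset.prod_singleton]
          congr 1
          rw [hkqa]
          push_cast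
          ring
      · have hk'1 : 1 < k' := lt_of_le_of_ne (Nat.one_le_iff_ne_zero.2 hk'0) (Ne.symm hg)
        obtain ⟨p, hpmem⟩ := Nat.nonempty_primeFactors.2 hk'1
        have hpp : p.Prime := Nat.prime_of_mem_primeFactors hpmem
        have hpq : p ≠ q := by
          have := hpf ▸ hpmem
          exact (Finset.mem_erase.1 this).1
        obtain ⟨H, hHdef⟩ : ∃ H : ℕ, (H:ℤ) = |h| := ⟨h.natAbs, (Int.abs_eq_natAbs h).symm⟩
        have hH1 : 1 ≤ H := by
          have h1 : (1:ℤ) ≤ |h| := Int.one_le_abs (by exact_mod_cast hh0)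
          omega
        have hHk : H < k := by
          have : (H:ℤ) < (k:ℤ) := hHdef ▸ habs
          exact_mod_cast this
        have hρ : 1 < (k:ℝ) / (H:ℝ) := by
          rw [one_lt_div (by positivity)]
          exact_mod_cast hHk
        obtain ⟨r₀, x, har, hpx, hqr⟩ := window_lemma q p hqp hpp (Ne.symm hpq) a _ hρ
        set f := p ^ x with hfdef
        have hf0 : f ≠ 0 := pow_ne_zero _ hpp.pos.ne'
        have hf_lt : f < q ^ r₀ := by exact_mod_cast hpx
        have hsize : H * q ^ (r₀ - a) < f * k' := by
          have hH0 : (0:ℝ) < (H:ℝ) := by exact_mod_cast hH1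
          have hqa : (0:ℝ) < (q:ℝ)^a := by
            have : (0:ℝ) < (q:ℝ) := by exact_mod_cast hqp.pos
            positivity
          have h1 : (H:ℝ) * (q:ℝ)^r₀ < (k:ℝ) * (p:ℝ)^x := by
            have h2 := (mul_lt_mul_iff_right₀ hH0).2 hqr
            calc (H:ℝ) * (q:ℝ)^r₀ < (H:ℝ) * ((k:ℝ)/(H:ℝ) * (p:ℝ)^x) := h2
            _ = (k:ℝ) * (p:ℝ)^x := by field_simp
          have h2 : (k:ℝ) = (q:ℝ)^a * (k':ℝ) := by exact_mod_cast hkk.symm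
          have h3 : (q:ℝ)^r₀ = (q:ℝ)^a * (q:ℝ)^(r₀ - a) := by
            rw [← pow_add]
            congr 1
            omega
          have h4 : (q:ℝ)^a * ((H:ℝ) * (q:ℝ)^(r₀-a)) < (q:ℝ)^a * ((k':ℝ) * (p:ℝ)^x) := by
            calc (q:ℝ)^a * ((H:ℝ) * (q:ℝ)^(r₀-a)) = (H:ℝ) * ((q:ℝ)^a * (q:ℝ)^(r₀-a)) := by ring
            _ = (H:ℝ) * (q:ℝ)^r₀ := by rw [← h3]
            _ < (k:ℝ) * (p:ℝ)^x := h1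
            _ = (q:ℝ)^a * ((k':ℝ) * (p:ℝ)^x) := by rw [h2]; ring
          have h5 : (H:ℝ) * (q:ℝ)^(r₀-a) < (k':ℝ) * (p:ℝ)^x := (mul_lt_mul_iff_right₀ hqa).1 h4
          have h6 : (H:ℝ) * (q:ℝ)^(r₀-a) < (f:ℝ) * (k':ℝ) := by
            rw [hfdef]
            push_cast
            linarith
          exact_mod_cast h6
        set k'' := f * k' with hk''def
        set h'' : ℤ := h * (q:ℤ) ^ (r₀ - a) with hh''def
        have hk''0 : k'' ≠ 0 := mul_ne_zero hf0 hk'0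
        have hpf'' : k''.primeFactors = k'.primeFactors := by
          rw [hk''def, Nat.primeFactors_mul hf0 hk'0]
          refine Finset.union_eq_right.2 ?_
          intro r hr
          have hrp : r.Prime := Nat.prime_of_mem_primeFactors hr
          have hrd : r ∣ f := Nat.dvd_of_mem_primeFactors hr
          have : r = p := by
            rw [hfdef] at hrd
            exact (Nat.prime_dvd_prime_iff_eq hrp hpp).1 (hrp.dvd_of_dvd_pow hrd)
          exact this ▸ hpmem
        have hcard'' : k''.primeFactors.card = g := by rw [hpf'', hcard']
        have hh''0 : h'' ≠ 0 :=
          mul_ne_zero hh0 (pow_ne_zero _ (by exact_mod_cast hqp.pos.ne' : (q:ℤ) ≠ 0))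
        have habs'' : |h''| < (k'':ℤ) := by
          have e1 : |h''| = (H:ℤ) * (q:ℤ)^(r₀-a) := by
            rw [hh''def, abs_mul, abs_pow, hHdef]
            rw [abs_of_nonneg (by positivity : (0:ℤ) ≤ (q:ℤ))]
          rw [e1]
          exact_mod_cast hsize
        obtain ⟨d', r', hbul, hprod⟩ := ih k'' hk''0 hcard'' h'' hh''0 habs''
        refine ⟨Function.update d' q (f:ℤ), Function.update r' q r₀, ?_, ?_⟩
        · intro q' hq'
          by_cases hq'q : q' = q
          · subst hq'q
            simp only [Function.update_self]
            refine ⟨by omega, ?_⟩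
            rw [abs_of_nonneg (by positivity : (0:ℤ) ≤ (f:ℤ))]
            exact_mod_cast hf_lt
          · rw [Function.update_of_ne hq'q, Function.update_of_ne hq'q]
            exact hbul q' (by rw [hpf'', hpf]; exact Finset.mem_erase.2 ⟨hq'q, hq'⟩)
        · have hins : k.primeFactors = insert q (k''.primeFactors) := by
            rw [hpf'', hpf, Finset.insert_erase hqmem]
          rw [hins, Finset.prod_insert (by rw [hpf'', hpf]; exact Finset.notMem_erase q _)]
          have hprod' : (∏ q' ∈ k''.primeFactors,
              (Function.update d' q (f:ℤ) q' : ℚ) / (q':ℚ) ^ (Function.update r' q r₀ q')) =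
              ∏ q' ∈ k''.primeFactors, (d' q' : ℚ) / (q':ℚ) ^ (r' q') := by
            apply Finset.prod_congr rfl
            intro q' hq'
            have hq'q : q' ≠ q := by
              rw [hpf'', hpf] at hq'
              exact (Finset.mem_erase.1 hq').1
            rw [Function.update_of_ne hq'q, Function.update_of_ne hq'q]
          rw [hprod', ← hprod]
          simp only [Function.update_self]
          have hkQ : (k:ℚ) = (q:ℚ)^a * (k':ℚ) := by exact_mod_cast hkk.symm
          have hq3 : (q:ℚ)^r₀ = (q:ℚ)^a * (q:ℚ)^(r₀ - a) := by
            rw [← pow_add]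
            congr 1
            omega
          have hcast1 : (h'' : ℚ) = (h:ℚ) * (q:ℚ)^(r₀ - a) := by
            rw [hh''def]
            push_cast
            ring
          have hcast2 : ((k'':ℕ) : ℚ) = (f:ℚ) * (k':ℚ) := by
            rw [hk''def]
            push_cast
            ring
          rw [hcast1, hcast2, hkQ, hq3]
          have hqQ : (q:ℚ) ≠ 0 := by exact_mod_cast hqp.pos.ne'
          have hfQ : (f:ℚ) ≠ 0 := by exact_mod_cast hf0
          have hk'Q : (k':ℚ) ≠ 0 := by exact_mod_cast hk'0
          field_simp
          norm_cast

theorem rat_as_prime_power_product (h k : ℤ) (hcop : IsCoprime h k) (hk : 0 < k)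
    (hne : h ≠ 0) (hlt : |(h : ℚ) / (k : ℚ)| < 1) :
    ∃ (d : ℕ → ℤ) (r : ℕ → ℕ),
      (∀ q ∈ k.natAbs.primeFactors, 0 < r q ∧ |d q| < (q : ℤ) ^ (r q)) ∧
      (h : ℚ) / (k : ℚ) = ∏ q ∈ k.natAbs.primeFactors, (d q : ℚ) / (q : ℚ) ^ (r q) := by
  have hkQ : (0:ℚ) < (k:ℚ) := by exact_mod_cast hk
  have habsQ : |(h:ℚ)| < (k:ℚ) := by
    rw [abs_div, abs_of_pos hkQ, div_lt_one hkQ] at hlt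
    exact hlt
  have habs : |h| < k := by exact_mod_cast habsQ
  have hknat : (k.natAbs : ℤ) = k := Int.natAbs_of_nonneg hk.le
  have hk0 : k.natAbs ≠ 0 := by
    intro h0
    rw [← hknat, h0] at hk
    exact absurd hk (by norm_num)
  obtain ⟨d, r, hbul, hprod⟩ := aux_main k.natAbs.primeFactors.card k.natAbs hk0 rfl h hne
    (by rw [hknat]; exact habs)
  refine ⟨d, r, hbul, ?_⟩
  have : ((k.natAbs : ℕ) : ℚ) = (k:ℚ) := by rw [Nat.cast_natAbs, abs_of_pos hk]
  rw [← this]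
  exact hprod
end

section
/- Let R ∈ ℂ[t] be a polynomial of degree 2 and k ∈ ℂ with k ≠ 0. Then R³ − k is not divisible by the square of any polynomial of degree 2 in ℂ[t]. -/
open Polynomial

theorem cube_sub_const_not_div_by_square (R : ℂ[X]) (hR : R.degree = 2)
    (k : ℂ) (hk : k ≠ 0) :
    ¬ ∃ Q : ℂ[X], Q.degree = 2 ∧ Q ^ 2 ∣ (R ^ 3 - C k) := by
  rintro ⟨Q, hQ2, hdvd⟩
  set P : ℂ[X] := R ^ 3 - C k with hPdef
  have hRnd : R.natDegree = 2 := natDegree_eq_of_degree_eq_some hR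
  have hPne : P ≠ 0 := by
    have h1 : (R ^ 3).degree = 6 := by
      rw [degree_pow, hR]; rfl
    have h2 : (C k).degree < (R ^ 3).degree := by
      rw [h1]
      exact lt_of_le_of_lt (degree_C_le) (by norm_num)
    have := degree_sub_eq_left_of_degree_lt h2
    intro h; rw [hPdef] at h; rw [h, degree_zero, h1] at this; exact absurd this (by simp)
  set D : ℂ[X] := derivative R with hDdef
  have hDdeg : D.degree = 1 := by
    rw [hDdef, degree_derivative_eq R (by rw [hRnd]; norm_num), hRnd]; norm_num
  have hDnd : D.natDegree = 1 := natDegree_eq_of_degree_eq_some hDdeg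
  have hP' : derivative P = C 3 * R ^ 2 * D := by
    simp [hPdef, derivative_pow, hDdef]
  -- key : roots of Q are double roots of P
  have key : ∀ a : ℂ, Q.IsRoot a → R.eval a ≠ 0 ∧ D.eval a = 0 := by
    intro a ha
    have h1 : (X - C a) ^ 2 ∣ P :=
      dvd_trans (pow_dvd_pow_of_dvd (dvd_iff_isRoot.mpr ha) 2) hdvd
    have h2 : 2 ≤ P.rootMultiplicity a := (le_rootMultiplicity_iff hPne).mpr h1
    have h0 : P.eval a = 0 := by
      have := isRoot_iterate_derivative_of_lt_rootMultiplicity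
        (show 0 < P.rootMultiplicity a by omega)
      simpa using this
    have hder : (derivative P).eval a = 0 := by
      have := isRoot_iterate_derivative_of_lt_rootMultiplicity
        (show 1 < P.rootMultiplicity a by omega)
      simpa using this
    have hRa : R.eval a ≠ 0 := by
      intro h
      rw [hPdef] at h0
      simp [h] at h0
      exact hk h0
    refine ⟨hRa, ?_⟩
    rw [hP'] at hder
    simp at hder
    rcases hder with h | h
    · exact absurd h hRa
    · exact h
  -- Q has a double root
  have hQne : Q ≠ 0 := fun h => by simp [h] at hQ2
  obtain ⟨a, ha⟩ := Complex.isAlgClosed.exists_root Q (by rw [hQ2]; norm_num)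
  obtain ⟨Q₁, hQ₁⟩ := dvd_iff_isRoot.mpr ha
  have hQ₁ne : Q₁ ≠ 0 := by rintro rfl; simp at hQ₁; exact hQne hQ₁
  have hQ₁deg : Q₁.degree = 1 := by
    have := hQ2
    rw [hQ₁, degree_mul, degree_X_sub_C] at this
    rw [show (2 : WithBot ℕ) = 1 + 1 from rfl] at this
    exact WithBot.add_left_cancel (by norm_num) this
  obtain ⟨b, hb⟩ := exists_root_of_degree_eq_one hQ₁deg
  have hbQ : Q.IsRoot b := by rw [hQ₁]; simp [IsRoot, hb.eq_zero]
  -- a = b since both are roots of the degree-1 polynomial D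
  obtain ⟨hRa, hDa⟩ := key a ha
  obtain ⟨hRb, hDb⟩ := key b hbQ
  have hDrep : D = C (D.coeff 1) * X + C (D.coeff 0) :=
    eq_X_add_C_of_degree_le_one (le_of_eq hDdeg)
  have hc1 : D.coeff 1 ≠ 0 := by
    have : D.coeff 1 = D.leadingCoeff := by rw [leadingCoeff, hDnd]
    rw [this]; exact leadingCoeff_ne_zero.mpr (fun h => by simp [h] at hDdeg)
  have hab : a = b := by
    rw [hDrep] at hDa hDb
    simp at hDa hDb
    have : D.coeff 1 * a = D.coeff 1 * b := by linear_combination hDa - hDb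
    exact mul_left_cancel₀ hc1 this
  subst hab
  -- so (X - C a)^2 ∣ Q, hence (X - C a)^4 ∣ P
  have h2Q : (X - C a) ^ 2 ∣ Q := by
    rw [hQ₁, sq]
    exact mul_dvd_mul_left _ (dvd_iff_isRoot.mpr hb)
  have h4P : (X - C a) ^ 4 ∣ P := by
    have : ((X - C a) ^ 2) ^ 2 ∣ Q ^ 2 := pow_dvd_pow_of_dvd h2Q 2
    rw [← pow_mul] at this
    exact this.trans hdvd
  have h4 : 4 ≤ P.rootMultiplicity a := (le_rootMultiplicity_iff hPne).mpr h4P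
  have hder2 : (derivative (derivative P)).eval a = 0 := by
    have := isRoot_iterate_derivative_of_lt_rootMultiplicity
      (show 2 < P.rootMultiplicity a by omega)
    simpa [Function.iterate_succ_apply'] using this
  -- compute second derivative at a
  have hP'' : derivative (derivative P) = C 3 * (C 2 * R * D * D + R ^ 2 * derivative D) := by
    rw [hP', derivative_mul, derivative_mul, derivative_C, derivative_sq]
    ring
  rw [hP''] at hder2
  simp [hDa] at hder2
  rcases hder2 with h | h
  · exact hRa h
  · -- derivative D is a nonzero constant
    have hD'deg : (derivative D).degree = 0 := by
      rw [degree_derivative_eq D (by rw [hDnd]; norm_num), hDnd]; rfl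
    have hrep := eq_C_of_degree_le_zero (le_of_eq hD'deg)
    rw [hrep] at h
    simp at h
    rw [h] at hrep
    simp [hrep] at hD'deg
end

section
/- Let R₁, R₂ ∈ ℂ[t] be polynomials of degree 2 and k ∈ ℂ with k ≠ 0. Then R₁³·R₂ − k is not the square of a polynomial in ℂ[t]. -/
open Polynomial

theorem cube_mul_sub_const_not_square (R₁ R₂ : ℂ[X]) (hR₁ : R₁.degree = 2)
    (hR₂ : R₂.degree = 2) (k : ℂ) (hk : k ≠ 0) :
    ¬ ∃ Q : ℂ[X], R₁ ^ 3 * R₂ - C k = Q ^ 2 := by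
  rintro ⟨Q, hQ⟩
  have hR₁0 : R₁ ≠ 0 := fun h => by simp [h] at hR₁
  have hdeg : (R₁ ^ 3 * R₂).degree = 8 := by
    rw [degree_mul, degree_pow, hR₁, hR₂]; rfl
  -- degree of Q² is 8
  have hQ2deg : (Q ^ 2).degree = 8 := by
    rw [← hQ, degree_sub_eq_left_of_degree_lt, hdeg]
    rw [hdeg]
    exact lt_of_le_of_lt degree_C_le (by norm_num)
  have hQ0 : Q ≠ 0 := by
    intro h
    rw [h] at hQ2deg
    simp at hQ2deg
  have hQnd : Q.natDegree = 4 := by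
    have h1 : (Q ^ 2).natDegree = 8 := natDegree_eq_of_degree_eq_some hQ2deg
    rw [natDegree_pow] at h1
    omega
  -- coprimality of Q and R₁
  have hcop : IsCoprime Q R₁ := by
    refine ⟨-(C k⁻¹) * Q, C k⁻¹ * (R₁ ^ 2 * R₂), ?_⟩
    have : Q ^ 2 - R₁ ^ 3 * R₂ = -C k := by rw [← hQ]; ring
    have h2 : -(C k⁻¹) * Q * Q + C k⁻¹ * (R₁ ^ 2 * R₂) * R₁
        = -(C k⁻¹) * (Q ^ 2 - R₁ ^ 3 * R₂) := by ring
    rw [h2, this, neg_mul_neg, ← C_mul, inv_mul_cancel₀ hk, C_1]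
  -- derivative equation
  have hder : R₁ ^ 2 * (C 3 * derivative R₁ * R₂ + R₁ * derivative R₂)
      = C 2 * Q * derivative Q := by
    have h := congrArg derivative hQ
    rw [derivative_sub, derivative_C, sub_zero, derivative_mul, derivative_pow,
      derivative_pow] at h
    simp only [Nat.cast_ofNat] at h
    linear_combination h
  have hdvd : R₁ ^ 2 ∣ C 2 * Q * derivative Q := ⟨_, hder.symm⟩
  have hcopC : IsCoprime (R₁ ^ 2) (C 2 : ℂ[X]) :=
    ⟨0, C 2⁻¹, by rw [zero_mul, zero_add, ← C_mul]; norm_num⟩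
  have hcop2 : IsCoprime (R₁ ^ 2) (C 2 * Q) :=
    IsCoprime.mul_right hcopC hcop.symm.pow_left
  have hdvd' : R₁ ^ 2 ∣ derivative Q := hcop2.dvd_of_dvd_mul_left hdvd
  -- degree contradiction
  have hder0 : derivative Q ≠ 0 := by
    intro h
    have := natDegree_eq_zero_of_derivative_eq_zero h
    omega
  have hle : (R₁ ^ 2).natDegree ≤ (derivative Q).natDegree :=
    natDegree_le_of_dvd hdvd' hder0
  have h1 : (R₁ ^ 2).natDegree = 4 := by
    rw [natDegree_pow, natDegree_eq_of_degree_eq_some hR₁]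
  have h2 : (derivative Q).natDegree ≤ 3 := by
    have := natDegree_derivative_le Q
    omega
  omega
end
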